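/- arXiv:1309.0458 — 3 statements merged into one kernel-verified Lean document; each statement's English description precedes it below -/
import Mathlib

section
/- There is an absolute constant C such that the following holds. Let F be any family of bijections f : {0,1}^n → {0,1}^n such that f(x) ≠ x for all x ∈ {0,1}^n, and let ε ∈ (0,1). If k is an integer with 1 ≤ k ≤ n − log log(4 · 2^n · |F|) − 2 log(1/ε) − C (logs base 2), then there exists a coding scheme with block length n and message length k such that for every f ∈ F and every s ∈ {0,1}^k, Pr[Dec(f(Enc(s))) ≠ ⊥] ≤ ε. In particular, such a scheme is non-malleable with respect to F with error ε, taking D_f to be the point distribution on ⊥. -/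
open Finset

/-- Bit strings of length `n`, i.e. `{0,1}^n`. -/
abbrev Word (n : ℕ) := Fin n → Bool

/-- Messages of length `k`, i.e. `{0,1}^k`. -/
abbrev Msg (k : ℕ) := Fin k → Bool

/-- Values in `{0,1}^k ∪ {⊥, same}`: `none` = `same`, `some none` = `⊥`,
`some (some s)` = the message `s`. -/
abbrev NMVal (k : ℕ) := Option (Option (Msg k))

/-- `copy x s = s` if `x = same`, and `copy x s = x` otherwise. -/
def copyFn {k : ℕ} (x : NMVal k) (s : Msg k) : Option (Msg k) := x.getD (some s)

/-- Statistical (total variation) distance between two mass functions on a finite set. -/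
noncomputable def statDist {α : Type*} [Fintype α] (P Q : α → ℝ) : ℝ :=
  (∑ x, |P x - Q x|) / 2

/-- A probability mass function on a finite set. -/
def IsDist {α : Type*} [Fintype α] (D : α → ℝ) : Prop :=
  (∀ a, 0 ≤ D a) ∧ ∑ a, D a = 1

/-- A coding scheme with block length `n` and message length `k`: a randomized
encoder `enc` (given as the probability mass function of `Enc(s)`) and a
deterministic decoder `dec` (`none` = `⊥`) such that `Dec(Enc(s)) = s` always. -/
structure CodingScheme (n k : ℕ) where
  enc : Msg k → Word n → ℝ
  dec : Word n → Option (Msg k)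
  enc_nonneg : ∀ s x, 0 ≤ enc s x
  enc_sum : ∀ s, ∑ x, enc s x = 1
  dec_enc : ∀ s x, 0 < enc s x → dec x = some s

/-- The distribution of `Dec(f(Enc(s)))`. -/
noncomputable def decDist {n k : ℕ} (C : CodingScheme n k)
    (f : Word n → Word n) (s : Msg k) : Option (Msg k) → ℝ :=
  fun y => ∑ x, if C.dec (f x) = y then C.enc s x else 0

/-- The distribution of `copy(S', s)` for `S' ~ D`. -/
noncomputable def copyDist {k : ℕ} (D : NMVal k → ℝ) (s : Msg k) : Option (Msg k) → ℝ :=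
  fun y => ∑ v, if copyFn v s = y then D v else 0

/-- The distribution `D_{f,s}` of the random variable that equals `same` if
`f(Enc(s)) = Enc(s)` and `Dec(f(Enc(s)))` otherwise. -/
noncomputable def tamperDist {n k : ℕ} (C : CodingScheme n k)
    (f : Word n → Word n) (s : Msg k) : NMVal k → ℝ :=
  fun v => ∑ x, if (if f x = x then (none : NMVal k) else some (C.dec (f x))) = v
    then C.enc s x else 0

/-- Non-malleability of a coding scheme w.r.t. a family `F` with error `ε`. -/
def NonMalleable {n k : ℕ} (C : CodingScheme n k)
    (F : Set (Word n → Word n)) (ε : ℝ) : Prop :=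
  ∀ f ∈ F, ∃ D : NMVal k → ℝ, IsDist D ∧
    ∀ s : Msg k, statDist (decDist C f s) (copyDist D s) ≤ ε

/-- Strong non-malleability of a coding scheme w.r.t. a family `F` with error `ε`. -/
def StronglyNonMalleable {n k : ℕ} (C : CodingScheme n k)
    (F : Set (Word n → Word n)) (ε : ℝ) : Prop :=
  ∀ f ∈ F, ∀ s₁ s₂ : Msg k, s₁ ≠ s₂ →
    statDist (tamperDist C f s₁) (tamperDist C f s₂) ≤ ε

/-- Hamming weight of a word. -/
def hammingWt {n : ℕ} (x : Word n) : ℕ := (univ.filter (fun i => x i = true)).card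

/-- The coding scheme has relative distance `δ`: any offset of a codeword by a
nonzero `Δ` of Hamming weight at most `δn` is rejected by the decoder. -/
def HasRelDist {n k : ℕ} (C : CodingScheme n k) (δ : ℝ) : Prop :=
  ∀ s x, 0 < C.enc s x → ∀ Δ : Word n, Δ ≠ (fun _ => false) →
    (hammingWt Δ : ℝ) ≤ δ * n → C.dec (fun i => xor (x i) (Δ i)) = none

/-- The binary entropy function (logs base 2). -/
noncomputable def binEnt (δ : ℝ) : ℝ :=
  -(δ * Real.logb 2 δ) - (1 - δ) * Real.logb 2 (1 - δ)

namespace NMAux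

section ProbCore

variable {ι β : Type*} [Fintype ι] [DecidableEq ι] [Fintype β] [Nonempty β]

lemma sum_split (p : ι → Prop) [DecidablePred p] (F G : (ι → β) → ℝ)
    (hF : ∀ ω₁ ω₂ : ι → β, (∀ x, p x → ω₁ x = ω₂ x) → F ω₁ = F ω₂)
    (hG : ∀ ω₁ ω₂ : ι → β, (∀ x, ¬ p x → ω₁ x = ω₂ x) → G ω₁ = G ω₂) :
    ∑ ω : ι → β, F ω * G ω
      = (∑ ω : ι → β, F ω) * (∑ ω : ι → β, G ω) / (Fintype.card (ι → β) : ℝ) := by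
  classical
  set e := (Equiv.piEquivPiSubtypeProd p fun _ : ι => β).symm with he
  have hsum : ∀ H : (ι → β) → ℝ, ∑ ω : ι → β, H ω = ∑ ab, H (e ab) :=
    fun H => (Equiv.sum_comp e H).symm
  obtain ⟨ω₀⟩ := (inferInstance : Nonempty (ι → β))
  set FA : (∀ i : {x // p x}, β) → ℝ := fun a => F (e (a, fun x => ω₀ x)) with hFA
  set GB : (∀ i : {x // ¬ p x}, β) → ℝ := fun b => G (e (fun x => ω₀ x, b)) with hGB
  have hFab : ∀ a b, F (e (a, b)) = FA a := by
    intro a b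
    apply hF
    intro x hx
    simp [he, Equiv.piEquivPiSubtypeProd_symm_apply, hx]
  have hGab : ∀ a b, G (e (a, b)) = GB b := by
    intro a b
    apply hG
    intro x hx
    simp [he, Equiv.piEquivPiSubtypeProd_symm_apply, hx]
  have hcard : (Fintype.card (ι → β) : ℝ)
      = (Fintype.card (∀ i : {x // p x}, β) : ℝ) * (Fintype.card (∀ i : {x // ¬ p x}, β) : ℝ) := by
    rw [← Nat.cast_mul, ← Fintype.card_prod]
    exact_mod_cast Fintype.card_congr (Equiv.piEquivPiSubtypeProd p fun _ : ι => β)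
  have h1 : ∑ ω : ι → β, F ω * G ω = (∑ a, FA a) * (∑ b, GB b) := by
    rw [hsum fun ω => F ω * G ω]
    rw [Fintype.sum_prod_type]
    simp only [hFab, hGab]
    rw [← Finset.sum_mul_sum]
  have h2 : ∑ ω : ι → β, F ω = (Fintype.card (∀ i : {x // ¬ p x}, β) : ℝ) * ∑ a, FA a := by
    rw [hsum F, Fintype.sum_prod_type]
    simp only [hFab]
    rw [Finset.sum_comm]
    simp [Finset.sum_const, Finset.card_univ, mul_comm]
  have h3 : ∑ ω : ι → β, G ω = (Fintype.card (∀ i : {x // p x}, β) : ℝ) * ∑ b, GB b := by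
    rw [hsum G, Fintype.sum_prod_type]
    simp only [hGab]
    simp [Finset.sum_const, Finset.card_univ]
  have hA : (0:ℝ) < Fintype.card (∀ i : {x // p x}, β) := by
    exact_mod_cast Fintype.card_pos
  have hB : (0:ℝ) < Fintype.card (∀ i : {x // ¬ p x}, β) := by
    exact_mod_cast Fintype.card_pos
  rw [h1, h2, h3, hcard]
  field_simp

lemma card_fun_pos : (0:ℝ) < (Fintype.card (ι → β) : ℝ) := by exact_mod_cast Fintype.card_pos

lemma sum_indep (B : ι → Finset ι) (S : Finset ι) (φ : ι → (ι → β) → ℝ)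
    (hdisj : ∀ i ∈ S, ∀ j ∈ S, i ≠ j → Disjoint (B i) (B j))
    (hloc : ∀ i ∈ S, ∀ ω₁ ω₂ : ι → β, (∀ x ∈ B i, ω₁ x = ω₂ x) → φ i ω₁ = φ i ω₂) :
    ∑ ω : ι → β, ∏ i ∈ S, φ i ω
      = (Fintype.card (ι → β) : ℝ)
        * ∏ i ∈ S, ((∑ ω : ι → β, φ i ω) / (Fintype.card (ι → β) : ℝ)) := by
  classical
  induction S using Finset.induction with
  | empty => simp [Finset.card_univ]
  | @insert a S ha ih =>
    have hN := (card_fun_pos (ι := ι) (β := β))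
    have hstep : ∑ ω : ι → β, ∏ i ∈ insert a S, φ i ω
        = (∑ ω : ι → β, φ a ω) * (∑ ω : ι → β, ∏ i ∈ S, φ i ω)
          / (Fintype.card (ι → β) : ℝ) := by
      have := sum_split (fun x => x ∈ B a) (φ a) (fun ω => ∏ i ∈ S, φ i ω)
        (by
          intro ω₁ ω₂ h
          exact hloc a (Finset.mem_insert_self a S) ω₁ ω₂ h)
        (by
          intro ω₁ ω₂ h
          refine Finset.prod_congr rfl fun i hi => ?_
          refine hloc i (Finset.mem_insert_of_mem hi) ω₁ ω₂ fun x hx => ?_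
          refine h x ?_
          have hd : Disjoint (B a) (B i) := by
            refine hdisj a (Finset.mem_insert_self a S) i (Finset.mem_insert_of_mem hi) ?_
            rintro rfl; exact ha hi
          exact Finset.disjoint_right.mp hd hx)
      simpa [Finset.prod_insert ha] using this
    rw [hstep, ih (fun i hi j hj hij => hdisj i (Finset.mem_insert_of_mem hi)
        j (Finset.mem_insert_of_mem hj) hij)
      (fun i hi => hloc i (Finset.mem_insert_of_mem hi)),
      Finset.prod_insert ha]
    field_simp

lemma sum_single (x : ι) (ψ : β → ℝ) :
    ∑ ω : ι → β, ψ (ω x)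
      = (Fintype.card (ι → β) : ℝ) * (∑ b, ψ b) / (Fintype.card β : ℝ) := by
  classical
  set e := (Equiv.funSplitAt x β).symm with he
  have hsum : ∑ ω : ι → β, ψ (ω x) = ∑ ab : β × ({ j // j ≠ x } → β), ψ (e ab x) :=
    (Equiv.sum_comp e fun ω => ψ (ω x)).symm
  have hx : ∀ ab : β × ({ j // j ≠ x } → β), e ab x = ab.1 := by
    intro ab; simp [he]
  rw [hsum]
  simp only [hx]
  rw [Fintype.sum_prod_type]
  have hcard : (Fintype.card (ι → β) : ℝ)
      = (Fintype.card β : ℝ) * (Fintype.card ({ j // j ≠ x } → β) : ℝ) := by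
    rw [← Nat.cast_mul, ← Fintype.card_prod]
    exact_mod_cast Fintype.card_congr (Equiv.funSplitAt x β)
  have hβ : (0:ℝ) < (Fintype.card β : ℝ) := by exact_mod_cast Fintype.card_pos
  simp only [Finset.sum_const, Finset.card_univ, nsmul_eq_mul]
  rw [hcard]
  rw [← Finset.mul_sum]
  field_simp

lemma sum_double (x y : ι) (hxy : x ≠ y) (ψ χ : β → ℝ) :
    ∑ ω : ι → β, ψ (ω x) * χ (ω y)
      = (Fintype.card (ι → β) : ℝ) * ((∑ b, ψ b) / (Fintype.card β : ℝ))
          * ((∑ b, χ b) / (Fintype.card β : ℝ)) := by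
  classical
  have h := sum_split (fun z => z = x) (fun ω => ψ (ω x)) (fun ω => χ (ω y))
    (by intro ω₁ ω₂ h; rw [h x rfl])
    (by intro ω₁ ω₂ h; rw [h y (Ne.symm hxy)])
  rw [h, sum_single, sum_single]
  have hN := (card_fun_pos (ι := ι) (β := β))
  have hβ : (0:ℝ) < (Fintype.card β : ℝ) := by exact_mod_cast Fintype.card_pos
  field_simp


end ProbCore

lemma exists_coloring {α : Type*} [Fintype α] [DecidableEq α] (f : α → α)
    (hf : Function.Bijective f) (hfp : ∀ x, f x ≠ x) :
    ∃ c : α → Fin 3, ∀ x, c (f x) ≠ c x := by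
  classical
  set g := Equiv.ofBijective f hf with hg
  have key : ∀ s : Finset α, ∃ c : α → Fin 3, ∀ x ∈ s, f x ∈ s → c (f x) ≠ c x := by
    intro s
    induction s using Finset.induction with
    | empty => exact ⟨fun _ => 0, by simp⟩
    | @insert a s ha ih =>
      obtain ⟨c, hc⟩ := ih
      have hpair : (({c (f a), c (g.symm a)} : Finset (Fin 3))).card < (univ : Finset (Fin 3)).card := by
        calc ({c (f a), c (g.symm a)} : Finset (Fin 3)).card
            ≤ ({c (g.symm a)} : Finset (Fin 3)).card + 1 := Finset.card_insert_le _ _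
          _ ≤ 2 := by simp
          _ < 3 := by norm_num
          _ = (univ : Finset (Fin 3)).card := by simp
      have hsd : (univ \ ({c (f a), c (g.symm a)} : Finset (Fin 3))).Nonempty := by
        rw [← Finset.card_pos, Finset.card_sdiff_of_subset (Finset.subset_univ _)]
        omega
      obtain ⟨col, hcolmem⟩ := hsd
      have hcol := Finset.mem_sdiff.mp hcolmem |>.2
      simp only [Finset.mem_insert, Finset.mem_singleton, not_or] at hcol
      refine ⟨Function.update c a col, ?_⟩
      intro x hx hfx
      rcases Finset.mem_insert.mp hx with rfl | hxs
      · -- x = a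
        have hfa : f x ≠ x := hfp x
        rw [Function.update_of_ne hfa, Function.update_self]
        intro h
        exact hcol.1 h.symm
      · rcases Finset.mem_insert.mp hfx with hfa | hfs
        · -- f x = a, so x = g.symm a
          have hxa : x ≠ a := by rintro rfl; exact ha hxs
          have hxga : x = g.symm a := by
            rw [← hfa]; exact (g.symm_apply_apply x).symm
          rw [hfa, Function.update_self, Function.update_of_ne hxa, hxga]
          exact fun h => hcol.2 h
        · have hxa : x ≠ a := by rintro rfl; exact ha hxs
          have hfxa : f x ≠ a := fun h => ha (h ▸ hfs)
          rw [Function.update_of_ne hfxa, Function.update_of_ne hxa]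
          exact hc x hxs hfs
  obtain ⟨c, hc⟩ := key univ
  exact ⟨c, fun x => hc x (mem_univ x) (mem_univ (f x))⟩


/-- The alphabet used by the random code. -/
abbrev Bβ (k r : ℕ) := (Fin r → Bool) × Msg k

/-- Decoder for a single symbol. -/
def dbeta {k r : ℕ} (b : Bβ k r) : Option (Msg k) :=
  if b.1 = (fun _ => false) then some b.2 else none

noncomputable def psi1 {k r : ℕ} (s : Msg k) (b : Bβ k r) : ℝ :=
  if dbeta b = some s then 1 else 0

noncomputable def psi2 {k r : ℕ} (b : Bβ k r) : ℝ :=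
  if dbeta b = none then 0 else 1

variable {n k r : ℕ}

lemma psi1_cases (s : Msg k) (b : Bβ k r) : psi1 s b = 0 ∨ psi1 s b = 1 := by
  unfold psi1; split <;> simp

lemma psi2_cases (b : Bβ k r) : psi2 b = 0 ∨ psi2 b = 1 := by
  unfold psi2; split <;> simp

lemma psi1_nonneg (s : Msg k) (b : Bβ k r) : 0 ≤ psi1 s b := by
  rcases psi1_cases s b with h | h <;> rw [h] <;> norm_num

lemma psi2_nonneg (b : Bβ k r) : 0 ≤ psi2 b := by
  rcases psi2_cases b with h | h <;> rw [h] <;> norm_num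

lemma sum_psi1 (s : Msg k) : ∑ b : Bβ k r, psi1 s b = 1 := by
  classical
  have h : ∀ b : Bβ k r, psi1 s b
      = if b = ((fun _ => false : Fin r → Bool), s) then 1 else 0 := by
    intro b
    unfold psi1 dbeta
    by_cases h1 : b.1 = (fun _ => false : Fin r → Bool)
    · by_cases h2 : b.2 = s
      · simp [h1, h2, Prod.ext_iff]
      · simp [h1, h2, Prod.ext_iff]
    · simp [h1, Prod.ext_iff]
  rw [Finset.sum_congr rfl fun b _ => h b]
  simp

lemma sum_psi2 : ∑ b : Bβ k r, psi2 b = 2 ^ k := by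
  classical
  have h : ∀ b : Bβ k r, psi2 b
      = if b.1 = (fun _ => false : Fin r → Bool) then 1 else 0 := by
    intro b
    unfold psi2 dbeta
    by_cases h1 : b.1 = (fun _ => false : Fin r → Bool) <;> simp [h1]
  rw [Finset.sum_congr rfl fun b _ => h b]
  rw [Fintype.sum_prod_type]
  have hinner : ∀ v : Fin r → Bool,
      (∑ _s' : Msg k, if v = (fun _ => false : Fin r → Bool) then (1:ℝ) else 0)
        = if v = (fun _ => false : Fin r → Bool) then (2:ℝ)^k else 0 := by
    intro v
    by_cases hv : v = (fun _ => false : Fin r → Bool) <;>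
      simp [hv, Finset.sum_const, Finset.card_univ, Fintype.card_fun]
  rw [Finset.sum_congr rfl fun v _ => hinner v]
  simp

lemma card_Bβ : (Fintype.card (Bβ k r) : ℝ) = 2 ^ (r + k) := by
  simp [Fintype.card_prod, Fintype.card_fun]
  push_cast
  ring

lemma card_Word : (Fintype.card (Word n) : ℝ) = 2 ^ n := by
  simp [Fintype.card_fun]

noncomputable def Zcl (f : Word n → Word n) (s : Msg k) (col : Word n → Fin 3) (c : Fin 3)
    (ω : Word n → Bβ k r) : ℝ :=
  ∑ x ∈ univ.filter (fun x => col x = c), psi1 s (ω x) * psi2 (ω (f x))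

noncomputable def Ztot (f : Word n → Word n) (s : Msg k) (ω : Word n → Bβ k r) : ℝ :=
  ∑ x, psi1 s (ω x) * psi2 (ω (f x))

noncomputable def Wtot (s : Msg k) (ω : Word n → Bβ k r) : ℝ :=
  ∑ x, psi1 s (ω x)

lemma alg1 (NN cc aa w : ℝ) (hcc : cc ≠ 0) :
    NN + aa * (NN * (1/cc) * (w/cc)) = NN * (1 + aa * (w/cc^2)) := by
  field_simp

/-- One-step "mgf" bound for the sum over one color class. -/
lemma mgf_class (f : Word n → Word n) (hinj : Function.Injective f)
    (hfp : ∀ x, f x ≠ x) (s : Msg k) (col : Word n → Fin 3)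
    (hcol : ∀ x, col (f x) ≠ col x) (c : Fin 3) (t : ℝ) (ht : 0 ≤ t) :
    ∑ ω : Word n → Bβ k r, Real.exp (t * Zcl f s col c ω)
      ≤ (Fintype.card (Word n → Bβ k r) : ℝ)
        * Real.exp ((Real.exp t - 1)
            * ((2 ^ k / (Fintype.card (Bβ k r) : ℝ) ^ 2) * (Fintype.card (Word n) : ℝ))) := by
  classical
  unfold Zcl
  have hN0 : (0:ℝ) < (Fintype.card (Word n → Bβ k r) : ℝ) := by exact_mod_cast Fintype.card_pos
  have hβ0 : (0:ℝ) < (Fintype.card (Bβ k r) : ℝ) := by exact_mod_cast Fintype.card_pos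
  have ha0 : 0 ≤ Real.exp t - 1 := by
    have := Real.one_le_exp ht
    linarith
  have hpp0 : (0:ℝ) ≤ 2 ^ k / (Fintype.card (Bβ k r) : ℝ) ^ 2 := by positivity
  -- pointwise product formula
  have hpt : ∀ ω : Word n → Bβ k r,
      Real.exp (t * ∑ x ∈ univ.filter (fun x => col x = c), psi1 s (ω x) * psi2 (ω (f x)))
        = ∏ x ∈ univ.filter (fun x => col x = c),
            (1 + (Real.exp t - 1) * (psi1 s (ω x) * psi2 (ω (f x)))) := by
    intro ω
    rw [Finset.mul_sum, Real.exp_sum]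
    refine Finset.prod_congr rfl fun x _ => ?_
    rcases psi1_cases s (ω x) with h1 | h1 <;> rcases psi2_cases (ω (f x)) with h2 | h2 <;>
      simp [h1, h2, Real.exp_zero]
  rw [Finset.sum_congr rfl fun ω _ => hpt ω]
  -- independence
  have hdisj : ∀ i ∈ univ.filter (fun x => col x = c), ∀ j ∈ univ.filter (fun x => col x = c),
      i ≠ j → Disjoint ({i, f i} : Finset (Word n)) ({j, f j} : Finset (Word n)) := by
    intro i hi j hj hij
    have hci : col i = c := by simpa using hi
    have hcj : col j = c := by simpa using hj
    rw [Finset.disjoint_left]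
    intro z hz hz'
    simp only [Finset.mem_insert, Finset.mem_singleton] at hz hz'
    rcases hz with h1 | h1 <;> rcases hz' with h2 | h2
    · exact hij (by rw [← h1, h2])
    · exact hcol j (by rw [← h2, h1, hci, hcj])
    · exact hcol i (by rw [← h1, h2, hcj, hci])
    · exact hij (hinj (by rw [← h1, h2]))
  have hindep := sum_indep (fun x => ({x, f x} : Finset (Word n)))
    (univ.filter (fun x => col x = c))
    (fun (x : Word n) (ω : Word n → Bβ k r) =>
      1 + (Real.exp t - 1) * (psi1 s (ω x) * psi2 (ω (f x)))) hdisj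
    (by
      intro i _ ω₁ ω₂ hagree
      have h1 : ω₁ i = ω₂ i := hagree i (by simp)
      have h2 : ω₁ (f i) = ω₂ (f i) := hagree (f i) (by simp)
      simp only [h1, h2])
  rw [hindep]
  -- per-factor expectation
  have hfac : ∀ x : Word n,
      (∑ ω : Word n → Bβ k r, (1 + (Real.exp t - 1) * (psi1 s (ω x) * psi2 (ω (f x)))))
        / (Fintype.card (Word n → Bβ k r) : ℝ)
        = 1 + (Real.exp t - 1) * (2 ^ k / (Fintype.card (Bβ k r) : ℝ) ^ 2) := by
    intro x
    have hd := sum_double (β := Bβ k r) x (f x) (Ne.symm (hfp x)) (psi1 s) psi2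
    rw [Finset.sum_add_distrib, Finset.sum_const, Finset.card_univ, ← Finset.mul_sum, hd,
      sum_psi1, sum_psi2, nsmul_eq_mul, mul_one,
      alg1 _ _ _ _ hβ0.ne', mul_div_cancel_left₀ _ hN0.ne']
  rw [Finset.prod_congr rfl fun x _ => hfac x, Finset.prod_const]
  -- bound the product
  have hone : (1 : ℝ) + (Real.exp t - 1) * (2 ^ k / (Fintype.card (Bβ k r) : ℝ) ^ 2)
      ≤ Real.exp ((Real.exp t - 1) * (2 ^ k / (Fintype.card (Bβ k r) : ℝ) ^ 2)) := by
    have := Real.add_one_le_exp ((Real.exp t - 1) * (2 ^ k / (Fintype.card (Bβ k r) : ℝ) ^ 2))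
    linarith
  have hcard : ((univ.filter (fun x => col x = c)).card : ℝ) ≤ (Fintype.card (Word n) : ℝ) := by
    have : (univ.filter (fun x => col x = c)).card ≤ Fintype.card (Word n) :=
      (Finset.card_filter_le _ _).trans (le_of_eq Finset.card_univ)
    exact_mod_cast this
  set q : ℝ := (Real.exp t - 1) * (2 ^ k / (Fintype.card (Bβ k r) : ℝ) ^ 2) with hq
  have hq0 : 0 ≤ q := mul_nonneg ha0 hpp0
  calc (Fintype.card (Word n → Bβ k r) : ℝ) * (1 + q) ^ (univ.filter (fun x => col x = c)).card
      ≤ (Fintype.card (Word n → Bβ k r) : ℝ)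
          * Real.exp q ^ (univ.filter (fun x => col x = c)).card := by
        apply mul_le_mul_of_nonneg_left (pow_le_pow_left₀ (by positivity) hone _) hN0.le
    _ = (Fintype.card (Word n → Bβ k r) : ℝ)
          * Real.exp (q * (univ.filter (fun x => col x = c)).card) := by
        rw [← Real.exp_nat_mul]; ring_nf
    _ ≤ (Fintype.card (Word n → Bβ k r) : ℝ)
          * Real.exp (q * (Fintype.card (Word n) : ℝ)) := by
        apply mul_le_mul_of_nonneg_left (Real.exp_le_exp.mpr
          (mul_le_mul_of_nonneg_left hcard hq0)) hN0.le
    _ = (Fintype.card (Word n → Bβ k r) : ℝ)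
        * Real.exp ((Real.exp t - 1)
            * ((2 ^ k / (Fintype.card (Bβ k r) : ℝ) ^ 2) * (Fintype.card (Word n) : ℝ))) := by
        rw [hq, mul_assoc]

lemma Ztot_eq (f : Word n → Word n) (s : Msg k) (col : Word n → Fin 3)
    (ω : Word n → Bβ k r) :
    Ztot f s ω = Zcl f s col 0 ω + Zcl f s col 1 ω + Zcl f s col 2 ω := by
  unfold Ztot Zcl
  rw [← Finset.sum_fiberwise_of_maps_to (g := col) (fun x _ => mem_univ (col x))
    (fun x => psi1 s (ω x) * psi2 (ω (f x))), Fin.sum_univ_three]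

lemma tail_Z (f : Word n → Word n) (hb : Function.Bijective f) (hfp : ∀ x, f x ≠ x)
    (s : Msg k) (T : ℝ) :
    ∑ ω : Word n → Bβ k r, (if T < Ztot f s ω then (1:ℝ) else 0)
      ≤ (Fintype.card (Word n → Bβ k r) : ℝ)
        * Real.exp ((Real.exp 2 - 1)
            * ((2 ^ k / (Fintype.card (Bβ k r) : ℝ) ^ 2) * (Fintype.card (Word n) : ℝ)) - T / 2) := by
  classical
  obtain ⟨col, hcol⟩ := exists_coloring f hb hfp
  set u : ℝ := (2 ^ k / (Fintype.card (Bβ k r) : ℝ) ^ 2) * (Fintype.card (Word n) : ℝ) with hu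
  have hu0 : 0 ≤ u := by
    rw [hu]; positivity
  set N : ℝ := (Fintype.card (Word n → Bβ k r) : ℝ) with hN
  have hN0 : (0:ℝ) < N := by rw [hN]; exact_mod_cast Fintype.card_pos
  set E : ℝ := N * Real.exp ((Real.exp 2 - 1) * u) with hE
  have hE0 : 0 ≤ E := by rw [hE]; positivity
  -- the moment bound
  have hX : (∑ ω : Word n → Bβ k r, Real.exp (Ztot f s ω / 2)) ≤ E := by
    set X : ℝ := ∑ ω : Word n → Bβ k r, Real.exp (Ztot f s ω / 2) with hX
    have hX0 : 0 ≤ X := by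
      rw [hX]; exact Finset.sum_nonneg fun ω _ => (Real.exp_pos _).le
    have hXsplit : X = ∑ ω : Word n → Bβ k r,
        Real.exp (Zcl f s col 0 ω / 2)
          * (Real.exp (Zcl f s col 1 ω / 2) * Real.exp (Zcl f s col 2 ω / 2)) := by
      rw [hX]
      refine Finset.sum_congr rfl fun ω _ => ?_
      rw [Ztot_eq f s col ω, ← Real.exp_add, ← Real.exp_add]
      ring_nf
    have hCS1 : X ^ 2 ≤ (∑ ω : Word n → Bβ k r, Real.exp (1 * Zcl f s col 0 ω))
        * (∑ ω : Word n → Bβ k r,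
            Real.exp (Zcl f s col 1 ω) * Real.exp (Zcl f s col 2 ω)) := by
      rw [hXsplit]
      have := Finset.sum_mul_sq_le_sq_mul_sq univ
        (fun ω : Word n → Bβ k r => Real.exp (Zcl f s col 0 ω / 2))
        (fun ω : Word n → Bβ k r =>
          Real.exp (Zcl f s col 1 ω / 2) * Real.exp (Zcl f s col 2 ω / 2))
      calc (∑ ω : Word n → Bβ k r, Real.exp (Zcl f s col 0 ω / 2)
          * (Real.exp (Zcl f s col 1 ω / 2) * Real.exp (Zcl f s col 2 ω / 2))) ^ 2
          ≤ (∑ ω : Word n → Bβ k r, Real.exp (Zcl f s col 0 ω / 2) ^ 2)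
            * ∑ ω : Word n → Bβ k r,
                (Real.exp (Zcl f s col 1 ω / 2) * Real.exp (Zcl f s col 2 ω / 2)) ^ 2 := this
        _ = (∑ ω : Word n → Bβ k r, Real.exp (1 * Zcl f s col 0 ω))
            * (∑ ω : Word n → Bβ k r,
                Real.exp (Zcl f s col 1 ω) * Real.exp (Zcl f s col 2 ω)) := by
            congr 1
            · refine Finset.sum_congr rfl fun ω _ => ?_
              rw [← Real.exp_nat_mul]
              norm_num
              try ring
            · refine Finset.sum_congr rfl fun ω _ => ?_
              rw [mul_pow, ← Real.exp_nat_mul, ← Real.exp_nat_mul, ← Real.exp_add,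
                ← Real.exp_add]
              norm_num
              ring_nf
    have hCS2 : (∑ ω : Word n → Bβ k r,
        Real.exp (Zcl f s col 1 ω) * Real.exp (Zcl f s col 2 ω)) ^ 2
        ≤ (∑ ω : Word n → Bβ k r, Real.exp (2 * Zcl f s col 1 ω))
          * (∑ ω : Word n → Bβ k r, Real.exp (2 * Zcl f s col 2 ω)) := by
      have := Finset.sum_mul_sq_le_sq_mul_sq univ
        (fun ω : Word n → Bβ k r => Real.exp (Zcl f s col 1 ω))
        (fun ω : Word n → Bβ k r => Real.exp (Zcl f s col 2 ω))
      calc (∑ ω : Word n → Bβ k r,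
          Real.exp (Zcl f s col 1 ω) * Real.exp (Zcl f s col 2 ω)) ^ 2
          ≤ (∑ ω : Word n → Bβ k r, Real.exp (Zcl f s col 1 ω) ^ 2)
            * ∑ ω : Word n → Bβ k r, Real.exp (Zcl f s col 2 ω) ^ 2 := this
        _ = (∑ ω : Word n → Bβ k r, Real.exp (2 * Zcl f s col 1 ω))
            * (∑ ω : Word n → Bβ k r, Real.exp (2 * Zcl f s col 2 ω)) := by
            congr 1 <;>
            · refine Finset.sum_congr rfl fun ω _ => ?_
              rw [← Real.exp_nat_mul]
              norm_num
              try ring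
    have hmgf1 := mgf_class (r := r) f hb.injective hfp s col hcol 0 1 zero_le_one
    have hmgf2 := mgf_class (r := r) f hb.injective hfp s col hcol 1 2 (by norm_num)
    have hmgf3 := mgf_class (r := r) f hb.injective hfp s col hcol 2 2 (by norm_num)
    have hEE : N * Real.exp ((Real.exp 1 - 1) * u) ≤ E := by
      rw [hE]
      apply mul_le_mul_of_nonneg_left _ hN0.le
      apply Real.exp_le_exp.mpr
      apply mul_le_mul_of_nonneg_right _ hu0
      have := Real.exp_le_exp.mpr (by norm_num : (1:ℝ) ≤ 2)
      linarith
    have h1nn : (0:ℝ) ≤ ∑ ω : Word n → Bβ k r, Real.exp (1 * Zcl f s col 0 ω) :=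
      Finset.sum_nonneg fun ω _ => (Real.exp_pos _).le
    have h23nn : (0:ℝ) ≤ ∑ ω : Word n → Bβ k r,
        Real.exp (Zcl f s col 1 ω) * Real.exp (Zcl f s col 2 ω) :=
      Finset.sum_nonneg fun ω _ => by positivity
    have h2nn : (0:ℝ) ≤ ∑ ω : Word n → Bβ k r, Real.exp (2 * Zcl f s col 1 ω) :=
      Finset.sum_nonneg fun ω _ => (Real.exp_pos _).le
    have h3nn : (0:ℝ) ≤ ∑ ω : Word n → Bβ k r, Real.exp (2 * Zcl f s col 2 ω) :=
      Finset.sum_nonneg fun ω _ => (Real.exp_pos _).le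
    have hfourth : X ^ 4 ≤ E ^ 4 := by
      calc X ^ 4 = (X ^ 2) ^ 2 := by ring
        _ ≤ ((∑ ω : Word n → Bβ k r, Real.exp (1 * Zcl f s col 0 ω))
            * (∑ ω : Word n → Bβ k r,
                Real.exp (Zcl f s col 1 ω) * Real.exp (Zcl f s col 2 ω))) ^ 2 := by
            apply pow_le_pow_left₀ (sq_nonneg X) hCS1
        _ = (∑ ω : Word n → Bβ k r, Real.exp (1 * Zcl f s col 0 ω)) ^ 2
            * (∑ ω : Word n → Bβ k r,
                Real.exp (Zcl f s col 1 ω) * Real.exp (Zcl f s col 2 ω)) ^ 2 := by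
            rw [mul_pow]
        _ ≤ (∑ ω : Word n → Bβ k r, Real.exp (1 * Zcl f s col 0 ω)) ^ 2
            * ((∑ ω : Word n → Bβ k r, Real.exp (2 * Zcl f s col 1 ω))
              * (∑ ω : Word n → Bβ k r, Real.exp (2 * Zcl f s col 2 ω))) := by
            apply mul_le_mul_of_nonneg_left hCS2 (sq_nonneg _)
        _ ≤ (N * Real.exp ((Real.exp 1 - 1) * u)) ^ 2 * (E * E) := by
            apply mul_le_mul
            · exact pow_le_pow_left₀ h1nn hmgf1 2
            · exact mul_le_mul (hmgf2.trans (le_of_eq rfl)) (hmgf3.trans (le_of_eq rfl))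
                h3nn hE0
            · exact mul_nonneg h2nn h3nn
            · positivity
        _ ≤ E ^ 2 * (E * E) := by
            apply mul_le_mul_of_nonneg_right (pow_le_pow_left₀ (by positivity) hEE 2)
              (mul_nonneg hE0 hE0)
        _ = E ^ 4 := by ring
    exact le_of_pow_le_pow_left₀ (by norm_num) hE0 hfourth
  -- Markov
  have hpt : ∀ ω : Word n → Bβ k r,
      (if T < Ztot f s ω then (1:ℝ) else 0) ≤ Real.exp (Ztot f s ω / 2) * Real.exp (-T / 2) := by
    intro ω
    by_cases h : T < Ztot f s ω
    · rw [if_pos h, ← Real.exp_add]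
      apply Real.one_le_exp
      linarith
    · rw [if_neg h]
      positivity
  calc ∑ ω : Word n → Bβ k r, (if T < Ztot f s ω then (1:ℝ) else 0)
      ≤ ∑ ω : Word n → Bβ k r, Real.exp (Ztot f s ω / 2) * Real.exp (-T / 2) :=
        Finset.sum_le_sum fun ω _ => hpt ω
    _ = (∑ ω : Word n → Bβ k r, Real.exp (Ztot f s ω / 2)) * Real.exp (-T / 2) := by
        rw [← Finset.sum_mul]
    _ ≤ E * Real.exp (-T / 2) := by
        apply mul_le_mul_of_nonneg_right hX (Real.exp_pos _).le
    _ = N * Real.exp ((Real.exp 2 - 1) * u - T / 2) := by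
        rw [hE, mul_assoc, ← Real.exp_add]
        ring_nf
lemma alg2 (NN cc aa : ℝ) (hNN : NN ≠ 0) (hcc : cc ≠ 0) :
    (NN + aa * (NN / cc)) / NN = 1 + aa / cc := by
  field_simp

/-- Lower tail for the number of codewords of a message. -/
lemma tail_W (s : Msg k) (T : ℝ) :
    ∑ ω : Word n → Bβ k r, (if Wtot s ω < T then (1:ℝ) else 0)
      ≤ (Fintype.card (Word n → Bβ k r) : ℝ)
        * Real.exp (T - (1 - Real.exp (-1))
            * ((Fintype.card (Word n) : ℝ) / (Fintype.card (Bβ k r) : ℝ))) := by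
  classical
  have hN0 : (0:ℝ) < (Fintype.card (Word n → Bβ k r) : ℝ) := by exact_mod_cast Fintype.card_pos
  have hβ1 : (1:ℝ) ≤ (Fintype.card (Bβ k r) : ℝ) := by exact_mod_cast Fintype.card_pos
  have hβ0 : (0:ℝ) < (Fintype.card (Bβ k r) : ℝ) := lt_of_lt_of_le one_pos hβ1
  have ha : Real.exp (-1) - 1 < 0 := by
    have : Real.exp (-1) < 1 := Real.exp_lt_one_iff.mpr (by norm_num)
    linarith
  have ha1 : -1 ≤ Real.exp (-1) - 1 := by
    have := (Real.exp_pos (-1)).le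
    linarith
  have hpt : ∀ ω : Word n → Bβ k r,
      Real.exp (-(Wtot s ω)) = ∏ x : Word n, (1 + (Real.exp (-1) - 1) * psi1 s (ω x)) := by
    intro ω
    unfold Wtot
    rw [← Finset.sum_neg_distrib, Real.exp_sum]
    refine Finset.prod_congr rfl fun x _ => ?_
    rcases psi1_cases s (ω x) with h1 | h1 <;> rw [h1]
    · simp
    · simp only [mul_one]
      rw [← neg_one_mul, mul_one]
      ring_nf
  have hsum : ∑ ω : Word n → Bβ k r, Real.exp (-(Wtot s ω))
      ≤ (Fintype.card (Word n → Bβ k r) : ℝ)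
        * Real.exp ((Real.exp (-1) - 1)
            * ((Fintype.card (Word n) : ℝ) / (Fintype.card (Bβ k r) : ℝ))) := by
    rw [Finset.sum_congr rfl fun ω _ => hpt ω]
    have hindep := sum_indep (fun x : Word n => ({x} : Finset (Word n))) univ
      (fun (x : Word n) (ω : Word n → Bβ k r) => 1 + (Real.exp (-1) - 1) * psi1 s (ω x))
      (by
        intro i _ j _ hij
        exact Finset.disjoint_singleton.mpr hij)
      (by
        intro i _ ω₁ ω₂ hagree
        have h1 : ω₁ i = ω₂ i := hagree i (by simp)
        simp only [h1])
    rw [hindep]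
    have hfac : ∀ x : Word n,
        (∑ ω : Word n → Bβ k r, (1 + (Real.exp (-1) - 1) * psi1 s (ω x)))
          / (Fintype.card (Word n → Bβ k r) : ℝ)
          = 1 + (Real.exp (-1) - 1) / (Fintype.card (Bβ k r) : ℝ) := by
      intro x
      rw [Finset.sum_add_distrib, Finset.sum_const, Finset.card_univ, ← Finset.mul_sum,
        sum_single x (psi1 s), sum_psi1, nsmul_eq_mul, mul_one,
        alg2 _ _ _ hN0.ne' hβ0.ne']
    rw [Finset.prod_congr rfl fun x _ => hfac x, Finset.prod_const, Finset.card_univ]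
    have hquot : -1 ≤ (Real.exp (-1) - 1) / (Fintype.card (Bβ k r) : ℝ) := by
      rw [le_div_iff₀ hβ0]
      nlinarith
    have hbase0 : (0:ℝ) ≤ 1 + (Real.exp (-1) - 1) / (Fintype.card (Bβ k r) : ℝ) := by
      linarith
    have hone : 1 + (Real.exp (-1) - 1) / (Fintype.card (Bβ k r) : ℝ)
        ≤ Real.exp ((Real.exp (-1) - 1) / (Fintype.card (Bβ k r) : ℝ)) := by
      have := Real.add_one_le_exp ((Real.exp (-1) - 1) / (Fintype.card (Bβ k r) : ℝ))
      linarith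
    calc (Fintype.card (Word n → Bβ k r) : ℝ)
        * (1 + (Real.exp (-1) - 1) / (Fintype.card (Bβ k r) : ℝ)) ^ Fintype.card (Word n)
        ≤ (Fintype.card (Word n → Bβ k r) : ℝ)
          * Real.exp ((Real.exp (-1) - 1) / (Fintype.card (Bβ k r) : ℝ))
              ^ Fintype.card (Word n) := by
          exact mul_le_mul_of_nonneg_left (pow_le_pow_left₀ hbase0 hone _) hN0.le
      _ = (Fintype.card (Word n → Bβ k r) : ℝ)
          * Real.exp ((Real.exp (-1) - 1)
              * ((Fintype.card (Word n) : ℝ) / (Fintype.card (Bβ k r) : ℝ))) := by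
          rw [← Real.exp_nat_mul]
          congr 1
          field_simp
  have hpt2 : ∀ ω : Word n → Bβ k r,
      (if Wtot s ω < T then (1:ℝ) else 0) ≤ Real.exp T * Real.exp (-(Wtot s ω)) := by
    intro ω
    by_cases h : Wtot s ω < T
    · rw [if_pos h, ← Real.exp_add]
      apply Real.one_le_exp
      linarith
    · rw [if_neg h]
      positivity
  calc ∑ ω : Word n → Bβ k r, (if Wtot s ω < T then (1:ℝ) else 0)
      ≤ ∑ ω : Word n → Bβ k r, Real.exp T * Real.exp (-(Wtot s ω)) :=
        Finset.sum_le_sum fun ω _ => hpt2 ω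
    _ = Real.exp T * ∑ ω : Word n → Bβ k r, Real.exp (-(Wtot s ω)) := by
        rw [← Finset.mul_sum]
    _ ≤ Real.exp T * ((Fintype.card (Word n → Bβ k r) : ℝ)
        * Real.exp ((Real.exp (-1) - 1)
            * ((Fintype.card (Word n) : ℝ) / (Fintype.card (Bβ k r) : ℝ)))) :=
        mul_le_mul_of_nonneg_left hsum (Real.exp_pos _).le
    _ = (Fintype.card (Word n → Bβ k r) : ℝ)
        * Real.exp (T - (1 - Real.exp (-1))
            * ((Fintype.card (Word n) : ℝ) / (Fintype.card (Bβ k r) : ℝ))) := by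
        rw [mul_comm (Real.exp T), mul_assoc, ← Real.exp_add]
        congr 2
        ring

lemma construction {d : ℕ} (hn : n = k + r + d)
    (F : Finset (Word n → Word n))
    (hFb : ∀ f ∈ F, Function.Bijective f ∧ ∀ x, f x ≠ x)
    (ε : ℝ) (hε : 0 < ε)
    (hq : ((2:ℝ)^r)⁻¹ ≤ ε / 64)
    (hbig : (F.card : ℝ) * 2^k * Real.exp (-(ε * (2:ℝ)^d)/7)
        + (2^k : ℝ) * Real.exp (-((2:ℝ)^d)/8) < 1) :
    ∃ Cs : CodingScheme n k, ∀ f ∈ F, ∀ s : Msg k,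
      (∑ x, if Cs.dec (f x) ≠ none then Cs.enc s x else 0) ≤ ε := by
  classical
  set m : ℝ := (2:ℝ)^d with hm
  have hm0 : (0:ℝ) < m := by rw [hm]; positivity
  have hm1 : (1:ℝ) ≤ m := by
    rw [hm]
    calc (1:ℝ) = (2:ℝ)^(0:ℕ) := by norm_num
      _ ≤ (2:ℝ)^d := pow_le_pow_right₀ one_le_two (Nat.zero_le d)
  have hN0 : (0:ℝ) < (Fintype.card (Word n → Bβ k r) : ℝ) := by exact_mod_cast Fintype.card_pos
  have h2r : (0:ℝ) < (2:ℝ)^r := by positivity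
  have h2k : (0:ℝ) < (2:ℝ)^k := by positivity
  -- the two exponent identities
  have hu : (2 ^ k / (Fintype.card (Bβ k r) : ℝ) ^ 2) * (Fintype.card (Word n) : ℝ)
      = m * ((2:ℝ)^r)⁻¹ := by
    rw [card_Bβ, card_Word, hn, hm]
    rw [pow_add, pow_add, pow_add]
    field_simp
  have hv : (Fintype.card (Word n) : ℝ) / (Fintype.card (Bβ k r) : ℝ) = m := by
    rw [card_Bβ, card_Word, hn, hm]
    rw [pow_add, pow_add, pow_add]
    field_simp
  have he2 : Real.exp 2 < 7.39 := by
    have h1 : Real.exp 2 = Real.exp 1 * Real.exp 1 := by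
      rw [← Real.exp_add]; norm_num
    have := Real.exp_one_lt_d9
    rw [h1]
    nlinarith [Real.exp_pos 1]
  have hei : Real.exp (-1) < 3/8 := by
    have h1 : Real.exp (-1) = (Real.exp 1)⁻¹ := Real.exp_neg 1
    have h2 := Real.exp_one_gt_d9
    rw [h1, inv_lt_comm₀ (by positivity) (by norm_num)]
    linarith
  -- per-(f,s) tails
  have hZtail : ∀ f ∈ F, ∀ s : Msg k,
      ∑ ω : Word n → Bβ k r, (if ε * m / 2 < Ztot f s ω then (1:ℝ) else 0)
        ≤ (Fintype.card (Word n → Bβ k r) : ℝ) * Real.exp (-(ε * m)/7) := by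
    intro f hf s
    refine (tail_Z f (hFb f hf).1 (hFb f hf).2 s (ε * m / 2)).trans ?_
    apply mul_le_mul_of_nonneg_left _ hN0.le
    apply Real.exp_le_exp.mpr
    rw [hu]
    have hb1 : (Real.exp 2 - 1) * (m * ((2:ℝ)^r)⁻¹) ≤ (7.39 - 1) * (m * (ε/64)) := by
      apply mul_le_mul (by linarith) _ (by positivity) (by norm_num)
      exact mul_le_mul_of_nonneg_left hq hm0.le
    nlinarith [mul_pos hε hm0]
  have hWtail : ∀ s : Msg k,
      ∑ ω : Word n → Bβ k r, (if Wtot s ω < m/2 then (1:ℝ) else 0)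
        ≤ (Fintype.card (Word n → Bβ k r) : ℝ) * Real.exp (-m/8) := by
    intro s
    refine (tail_W s (m/2)).trans ?_
    apply mul_le_mul_of_nonneg_left _ hN0.le
    apply Real.exp_le_exp.mpr
    rw [hv]
    nlinarith
  -- union bound
  have hcardMsg : (Fintype.card (Msg k) : ℝ) = 2^k := by
    simp [Fintype.card_fun]
  have hunion : ∑ ω : Word n → Bβ k r,
      ((∑ f ∈ F, ∑ s : Msg k, if ε * m / 2 < Ztot f s ω then (1:ℝ) else 0)
        + ∑ s : Msg k, if Wtot s ω < m/2 then (1:ℝ) else 0)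
      < ∑ ω : Word n → Bβ k r, (1:ℝ) := by
    rw [Finset.sum_add_distrib]
    have hA : ∑ ω : Word n → Bβ k r,
        ∑ f ∈ F, ∑ s : Msg k, (if ε * m / 2 < Ztot f s ω then (1:ℝ) else 0)
        ≤ (F.card : ℝ) * 2^k
          * ((Fintype.card (Word n → Bβ k r) : ℝ) * Real.exp (-(ε * m)/7)) := by
      rw [Finset.sum_comm]
      calc ∑ f ∈ F, ∑ ω : Word n → Bβ k r,
            ∑ s : Msg k, (if ε * m / 2 < Ztot f s ω then (1:ℝ) else 0)
          = ∑ f ∈ F, ∑ s : Msg k,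
              ∑ ω : Word n → Bβ k r, (if ε * m / 2 < Ztot f s ω then (1:ℝ) else 0) := by
            refine Finset.sum_congr rfl fun f _ => ?_
            rw [Finset.sum_comm]
        _ ≤ ∑ f ∈ F, ∑ _s : Msg k,
              (Fintype.card (Word n → Bβ k r) : ℝ) * Real.exp (-(ε * m)/7) := by
            refine Finset.sum_le_sum fun f hf => Finset.sum_le_sum fun s _ => hZtail f hf s
        _ = (F.card : ℝ) * 2^k
            * ((Fintype.card (Word n → Bβ k r) : ℝ) * Real.exp (-(ε * m)/7)) := by
            rw [Finset.sum_const, Finset.sum_const, Finset.card_univ, nsmul_eq_mul,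
              nsmul_eq_mul, hcardMsg]
            ring
    have hB : ∑ ω : Word n → Bβ k r,
        ∑ s : Msg k, (if Wtot s ω < m/2 then (1:ℝ) else 0)
        ≤ (2^k : ℝ) * ((Fintype.card (Word n → Bβ k r) : ℝ) * Real.exp (-m/8)) := by
      rw [Finset.sum_comm]
      calc ∑ s : Msg k, ∑ ω : Word n → Bβ k r, (if Wtot s ω < m/2 then (1:ℝ) else 0)
          ≤ ∑ _s : Msg k, (Fintype.card (Word n → Bβ k r) : ℝ) * Real.exp (-m/8) :=
            Finset.sum_le_sum fun s _ => hWtail s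
        _ = (2^k : ℝ) * ((Fintype.card (Word n → Bβ k r) : ℝ) * Real.exp (-m/8)) := by
            rw [Finset.sum_const, Finset.card_univ, nsmul_eq_mul, hcardMsg]
    have hC : ∑ ω : Word n → Bβ k r, (1:ℝ) = (Fintype.card (Word n → Bβ k r) : ℝ) := by
      rw [Finset.sum_const, Finset.card_univ, nsmul_eq_mul, mul_one]
    rw [hC]
    calc (∑ ω : Word n → Bβ k r,
          ∑ f ∈ F, ∑ s : Msg k, (if ε * m / 2 < Ztot f s ω then (1:ℝ) else 0))
        + ∑ ω : Word n → Bβ k r, ∑ s : Msg k, (if Wtot s ω < m/2 then (1:ℝ) else 0)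
        ≤ (F.card : ℝ) * 2^k
            * ((Fintype.card (Word n → Bβ k r) : ℝ) * Real.exp (-(ε * m)/7))
          + (2^k : ℝ) * ((Fintype.card (Word n → Bβ k r) : ℝ) * Real.exp (-m/8)) :=
          add_le_add hA hB
      _ = (Fintype.card (Word n → Bβ k r) : ℝ)
          * ((F.card : ℝ) * 2^k * Real.exp (-(ε * m)/7)
            + (2^k : ℝ) * Real.exp (-m/8)) := by ring
      _ < (Fintype.card (Word n → Bβ k r) : ℝ) := by
          have h2 : (F.card : ℝ) * 2^k * Real.exp (-(ε * m)/7)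
              + (2^k : ℝ) * Real.exp (-m/8) < 1 := by
            rw [hm]; exact hbig
          nlinarith
  obtain ⟨ω, hω⟩ := Finset.exists_lt_of_sum_lt hunion
  -- extract goodness
  have hind1 : ∀ f ∈ F, ∀ s : Msg k, Ztot f s ω ≤ ε * m / 2 := by
    intro f hf s
    by_contra hcon
    push_neg at hcon
    have h1 : (1:ℝ) ≤ ∑ f ∈ F, ∑ s' : Msg k, (if ε * m / 2 < Ztot f s' ω then (1:ℝ) else 0) := by
      calc (1:ℝ) = (if ε * m / 2 < Ztot f s ω then (1:ℝ) else 0) := by rw [if_pos hcon]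
        _ ≤ ∑ s' : Msg k, (if ε * m / 2 < Ztot f s' ω then (1:ℝ) else 0) :=
            Finset.single_le_sum
              (f := fun s' : Msg k => if ε * m / 2 < Ztot f s' ω then (1:ℝ) else 0)
              (fun s' _ => by positivity) (mem_univ s)
        _ ≤ ∑ f ∈ F, ∑ s' : Msg k, (if ε * m / 2 < Ztot f s' ω then (1:ℝ) else 0) :=
            Finset.single_le_sum
              (f := fun f' => ∑ s' : Msg k, if ε * m / 2 < Ztot f' s' ω then (1:ℝ) else 0)
              (fun f' _ => Finset.sum_nonneg fun s' _ => by positivity) hf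
    have h2 : (0:ℝ) ≤ ∑ s : Msg k, (if Wtot s ω < m/2 then (1:ℝ) else 0) :=
      Finset.sum_nonneg fun s _ => by positivity
    linarith
  have hind2 : ∀ s : Msg k, m/2 ≤ Wtot s ω := by
    intro s
    by_contra hcon
    push_neg at hcon
    have h1 : (1:ℝ) ≤ ∑ s' : Msg k, (if Wtot s' ω < m/2 then (1:ℝ) else 0) := by
      calc (1:ℝ) = (if Wtot s ω < m/2 then (1:ℝ) else 0) := by rw [if_pos hcon]
        _ ≤ ∑ s' : Msg k, (if Wtot s' ω < m/2 then (1:ℝ) else 0) :=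
            Finset.single_le_sum
              (f := fun s' : Msg k => if Wtot s' ω < m/2 then (1:ℝ) else 0)
              (fun s' _ => by positivity) (mem_univ s)
    have h2 : (0:ℝ) ≤ ∑ f ∈ F, ∑ s' : Msg k, (if ε * m / 2 < Ztot f s' ω then (1:ℝ) else 0) :=
      Finset.sum_nonneg fun f _ => Finset.sum_nonneg fun s' _ => by positivity
    linarith
  -- build the coding scheme
  have hW0 : ∀ s : Msg k, (0:ℝ) < Wtot s ω := fun s =>
    lt_of_lt_of_le (by linarith : (0:ℝ) < m/2) (hind2 s)
  refine ⟨⟨fun s x => if dbeta (ω x) = some s then (Wtot s ω)⁻¹ else 0,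
      fun x => dbeta (ω x), ?_, ?_, ?_⟩, ?_⟩
  · intro s x
    split
    · exact inv_nonneg.mpr (hW0 s).le
    · exact le_refl 0
  · intro s
    have hterm : ∀ x : Word n,
        (if dbeta (ω x) = some s then (Wtot s ω)⁻¹ else 0)
          = psi1 s (ω x) * (Wtot s ω)⁻¹ := by
      intro x
      unfold psi1
      split <;> simp
    rw [Finset.sum_congr rfl fun x _ => hterm x, ← Finset.sum_mul]
    exact mul_inv_cancel₀ (hW0 s).ne'
  · intro s x h
    by_cases hx : dbeta (ω x) = some s
    · exact hx
    · rw [if_neg hx] at h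
      exact absurd h (lt_irrefl 0)
  · intro f hf s
    dsimp only
    have hterm : ∀ x : Word n,
        (if (dbeta (ω (f x)) ≠ none)
          then (if dbeta (ω x) = some s then (Wtot s ω)⁻¹ else 0)
          else 0)
        = psi1 s (ω x) * psi2 (ω (f x)) * (Wtot s ω)⁻¹ := by
      intro x
      unfold psi1 psi2
      by_cases h1 : dbeta (ω x) = some s <;> by_cases h2 : dbeta (ω (f x)) = none <;>
        simp [h1, h2]
    rw [Finset.sum_congr rfl fun x _ => hterm x, ← Finset.sum_mul]
    have hZ : (∑ x, psi1 s (ω x) * psi2 (ω (f x))) = Ztot f s ω := rfl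
    rw [hZ, ← div_eq_mul_inv, div_le_iff₀ (hW0 s)]
    calc Ztot f s ω ≤ ε * m / 2 := hind1 f hf s
      _ = ε * (m / 2) := by ring
      _ ≤ ε * Wtot s ω := mul_le_mul_of_nonneg_left (hind2 s) hε.le

lemma nm_of_bot {n k : ℕ} (Cs : CodingScheme n k) (F : Set (Word n → Word n)) (ε : ℝ)
    (h : ∀ f ∈ F, ∀ s : Msg k, (∑ x, if Cs.dec (f x) ≠ none then Cs.enc s x else 0) ≤ ε) :
    NonMalleable Cs F ε := by
  classical
  intro f hf
  refine ⟨fun v => if v = some none then 1 else 0, ⟨fun a => by positivity, by simp⟩, ?_⟩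
  intro s
  have hQ : ∀ y : Option (Msg k),
      copyDist (fun v => if v = some none then (1:ℝ) else 0) s y
        = if y = none then 1 else 0 := by
    intro y
    unfold copyDist
    rw [Finset.sum_eq_single (some none)]
    · by_cases hy : y = none
      · simp [hy, copyFn]
      · simp [hy, copyFn, Ne.symm hy]
    · intro v _ hv
      simp [hv]
    · intro hmem
      exact absurd (mem_univ _) hmem
  set P : Option (Msg k) → ℝ := decDist Cs f s with hP
  have hP0 : ∀ y, 0 ≤ P y := by
    intro y
    refine Finset.sum_nonneg fun x _ => ?_
    split
    · exact Cs.enc_nonneg s x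
    · exact le_refl 0
  have hS0 : (0:ℝ) ≤ ∑ x, if Cs.dec (f x) ≠ none then Cs.enc s x else 0 := by
    refine Finset.sum_nonneg fun x _ => ?_
    split
    · exact Cs.enc_nonneg s x
    · exact le_refl 0
  have hsplit : P none + (∑ x, if Cs.dec (f x) ≠ none then Cs.enc s x else 0) = 1 := by
    rw [hP]
    unfold decDist
    rw [← Finset.sum_add_distrib]
    rw [show ∀ (g : Word n → ℝ), (∑ x, g x) = ∑ x, g x from fun g => rfl]
    calc (∑ x, ((if Cs.dec (f x) = none then Cs.enc s x else 0)
            + if Cs.dec (f x) ≠ none then Cs.enc s x else 0))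
        = ∑ x, Cs.enc s x := by
          refine Finset.sum_congr rfl fun x _ => ?_
          by_cases hx : Cs.dec (f x) = none <;> simp [hx]
      _ = 1 := Cs.enc_sum s
  have hPnone : P none ≤ 1 := by
    have := hsplit
    linarith
  have hPsum : ∑ y, P y = 1 := by
    rw [hP]
    unfold decDist
    rw [Finset.sum_comm]
    calc (∑ x, ∑ y, if Cs.dec (f x) = y then Cs.enc s x else 0)
        = ∑ x, Cs.enc s x := by
          refine Finset.sum_congr rfl fun x _ => ?_
          rw [Finset.sum_ite_eq]
          simp
      _ = 1 := Cs.enc_sum s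
  -- compute the statistical distance
  unfold statDist
  rw [Finset.sum_congr rfl fun y _ => by rw [hQ y]]
  have hsum_split : (∑ y : Option (Msg k), |P y - if y = none then (1:ℝ) else 0|)
      = |P none - 1| + ∑ y ∈ (univ : Finset (Option (Msg k))).erase none, |P y| := by
    have e1 : |P none - (if (none : Option (Msg k)) = none then (1:ℝ) else 0)| = |P none - 1| := by
      simp
    have e2 : ∀ y ∈ (univ : Finset (Option (Msg k))).erase none,
        |P y - if y = none then (1:ℝ) else 0| = |P y| := by
      intro y hy
      have hy' := (Finset.mem_erase.mp hy).1
      simp [hy']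
    rw [← Finset.add_sum_erase _ _ (mem_univ (none : Option (Msg k))), e1,
      Finset.sum_congr rfl e2]
  rw [hsum_split]
  have h1 : |P none - 1| = 1 - P none := by
    rw [abs_of_nonpos (by linarith)]
    ring
  have h2 : ∑ y ∈ (univ : Finset (Option (Msg k))).erase none, |P y|
      = 1 - P none := by
    rw [Finset.sum_congr rfl fun y hy => abs_of_nonneg (hP0 y)]
    rw [Finset.sum_erase_eq_sub (mem_univ (none : Option (Msg k))), hPsum]
  rw [h1, h2]
  have h3 : 1 - P none = ∑ x, if Cs.dec (f x) ≠ none then Cs.enc s x else 0 := by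
    linarith
  rw [h3]
  calc ((∑ x, if Cs.dec (f x) ≠ none then Cs.enc s x else 0)
        + ∑ x, if Cs.dec (f x) ≠ none then Cs.enc s x else 0) / 2
      = ∑ x, if Cs.dec (f x) ≠ none then Cs.enc s x else 0 := by ring
    _ ≤ ε := h f hf s

/-- A trivial coding scheme when `k ≤ n` (used for `F = ∅`). -/
def padWord {n k : ℕ} (hkn : k ≤ n) (s : Msg k) : Word n :=
  fun i => if h : (i : ℕ) < k then s ⟨i, h⟩ else false

noncomputable def trivialScheme (n k : ℕ) (hkn : k ≤ n) : CodingScheme n k where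
  enc := fun s x => if x = padWord hkn s then 1 else 0
  dec := fun x => some (fun j => x ⟨j, lt_of_lt_of_le j.2 hkn⟩)
  enc_nonneg := fun s x => by positivity
  enc_sum := fun s => by simp
  dec_enc := fun s x h => by
    have hx : x = padWord hkn s := by
      by_contra hc
      simp only [if_neg hc] at h
      exact absurd h (lt_irrefl 0)
    subst hx
    show some (fun j : Fin k => padWord hkn s ⟨j, lt_of_lt_of_le j.2 hkn⟩) = some s
    congr 1
    funext j
    unfold padWord
    rw [dif_pos j.2]


end NMAux

open NMAux in
set_option maxHeartbeats 1000000 in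
/-- There is an absolute constant `C` such that for every family `F`
of fixed-point-free bijections on `{0,1}^n`, every `ε ∈ (0,1)`, and every integer `k`
with `1 ≤ k ≤ n − log log(4·2^n·|F|) − 2 log(1/ε) − C`, there is a coding scheme with
block length `n`, message length `k` such that `Pr[Dec(f(Enc(s))) ≠ ⊥] ≤ ε` for every
`f ∈ F` and `s`; in particular it is non-malleable w.r.t. `F` with error `ε`. -/
theorem nonmalleable_bijective_adversaries :
    ∃ C : ℝ, ∀ n : ℕ, 1 ≤ n → ∀ F : Finset (Word n → Word n),
    (∀ f ∈ F, Function.Bijective f ∧ ∀ x, f x ≠ x) →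
    ∀ ε : ℝ, 0 < ε → ε < 1 →
    ∀ k : ℕ, 1 ≤ k →
    (k : ℝ) ≤ (n : ℝ)
        - Real.logb 2 (Real.logb 2 (4 * 2 ^ (n : ℕ) * (F.card : ℝ)))
        - 2 * Real.logb 2 (1/ε) - C →
    ∃ Cs : CodingScheme n k,
      (∀ f ∈ F, ∀ s : Msg k,
        (∑ x, if Cs.dec (f x) ≠ none then Cs.enc s x else 0) ≤ ε) ∧
      NonMalleable Cs (↑F) ε := by
  classical
  refine ⟨30, ?_⟩
  intro n hn F hFb ε hε hε1 k hk hbound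
  have hεinv1 : (1:ℝ) ≤ 1/ε := by
    rw [le_div_iff₀ hε]
    linarith
  have hlogε : (0:ℝ) ≤ Real.logb 2 (1/ε) := Real.logb_nonneg one_lt_two hεinv1
  rcases Finset.eq_empty_or_nonempty F with hF0 | hF1
  · -- F empty: trivial scheme
    subst hF0
    have hkn : (k:ℝ) < n := by
      simp only [Finset.card_empty, Nat.cast_zero, mul_zero, Real.logb_zero] at hbound
      linarith
    have hkn' : k ≤ n := le_of_lt (by exact_mod_cast hkn)
    refine ⟨trivialScheme n k hkn', ?_, ?_⟩
    · intro f hf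
      exact absurd hf (Finset.notMem_empty f)
    · apply nm_of_bot
      intro f hf
      simp at hf
  · -- main case
    have hFc1 : (1:ℝ) ≤ (F.card : ℝ) := by
      exact_mod_cast Finset.card_pos.mpr hF1
    have hFc0 : (0:ℝ) < (F.card : ℝ) := lt_of_lt_of_le one_pos hFc1
    set L : ℝ := Real.logb 2 (4 * 2 ^ (n:ℕ) * (F.card : ℝ)) with hLdef
    have hL : L = 2 + n + Real.logb 2 (F.card : ℝ) := by
      rw [hLdef, Real.logb_mul (by positivity) (by positivity),
        Real.logb_mul (by norm_num) (by positivity)]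
      congr 2
      · rw [show (4:ℝ) = 2^(2:ℕ) by norm_num, Real.logb_pow, Real.logb_self_eq_one] <;>
          norm_num
      · rw [Real.logb_pow, Real.logb_self_eq_one] <;> norm_num
    have hlogFc : (0:ℝ) ≤ Real.logb 2 (F.card : ℝ) := Real.logb_nonneg one_lt_two hFc1
    have hn1 : (1:ℝ) ≤ (n:ℝ) := by exact_mod_cast hn
    have hL3 : (3:ℝ) ≤ L := by rw [hL]; linarith
    have hL0 : (0:ℝ) < L := by linarith
    have hlogL : (0:ℝ) ≤ Real.logb 2 L := Real.logb_nonneg one_lt_two (by linarith)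
    -- k < n
    have hkltn : k < n := by
      have : (k:ℝ) < (n:ℝ) := by linarith
      exact_mod_cast this
    -- the power bound
    have hPnat : (2:ℝ)^(30:ℕ) * L * (1/ε)^(2:ℕ) ≤ (2:ℝ)^((n - k : ℕ)) := by
      have hcast : ((n - k : ℕ):ℝ) = (n:ℝ) - (k:ℝ) := by
        rw [Nat.cast_sub hkltn.le]
      have hexp : Real.logb 2 L + 2 * Real.logb 2 (1/ε) + 30 ≤ ((n - k : ℕ):ℝ) := by
        rw [hcast]; linarith
      have h30 : ((2:ℝ)^(30:ℕ) : ℝ) = (2:ℝ)^((30:ℕ):ℝ) := by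
        rw [Real.rpow_natCast]
      calc (2:ℝ)^(30:ℕ) * L * (1/ε)^(2:ℕ)
          = (2:ℝ)^(Real.logb 2 L + 2 * Real.logb 2 (1/ε) + 30) := by
            rw [Real.rpow_add (by norm_num), Real.rpow_add (by norm_num),
              Real.rpow_logb (by norm_num) (by norm_num) hL0,
              show (2:ℝ)^(2 * Real.logb 2 (1/ε)) = ((2:ℝ)^(Real.logb 2 (1/ε)))^(2:ℕ) by
                rw [← Real.rpow_natCast ((2:ℝ)^(Real.logb 2 (1/ε))) 2, ← Real.rpow_mul
                  (by norm_num)]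
                norm_num
                ring_nf,
              Real.rpow_logb (by norm_num) (by norm_num) (by positivity)]
            rw [show ((30:ℝ)) = ((30:ℕ):ℝ) by norm_num, Real.rpow_natCast]
            ring
        _ ≤ (2:ℝ)^(((n - k : ℕ)):ℝ) :=
            Real.rpow_le_rpow_of_exponent_le one_le_two hexp
        _ = (2:ℝ)^((n - k : ℕ)) := Real.rpow_natCast 2 (n - k)
    -- choose r
    set Sn : ℕ := ⌈(64:ℝ)/ε⌉₊ with hSn
    have hSn64 : (64:ℝ)/ε ≤ (Sn:ℝ) := Nat.le_ceil _
    have hSnge : (64:ℝ) ≤ (Sn:ℝ) := by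
      calc (64:ℝ) = 64/1 := by norm_num
        _ ≤ 64/ε := by
            apply div_le_div_of_nonneg_left (by norm_num) hε hε1.le
        _ ≤ (Sn:ℝ) := hSn64
    have hSn1 : 1 < Sn := by exact_mod_cast lt_of_lt_of_le (by norm_num : (1:ℝ) < 64) hSnge
    set r : ℕ := Nat.clog 2 Sn with hr
    have h2r_low : (64:ℝ)/ε ≤ (2:ℝ)^r := by
      calc (64:ℝ)/ε ≤ (Sn:ℝ) := hSn64
        _ ≤ ((2^r : ℕ):ℝ) := by exact_mod_cast Nat.le_pow_clog one_lt_two Sn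
        _ = (2:ℝ)^r := by push_cast; ring
    have h2r_up : (2:ℝ)^r ≤ 130/ε := le_of_lt (by
      have h1 : 2^(r-1) < Sn := Nat.pow_pred_clog_lt_self one_lt_two hSn1
      have hr1 : 1 ≤ r := by
        by_contra hc
        push_neg at hc
        interval_cases r
        have h2 := Nat.le_pow_clog one_lt_two Sn
        rw [← hr] at h2
        omega
      have h2 : (2:ℕ)^r ≤ 2 * Sn := by
        calc (2:ℕ)^r = 2 * 2^(r-1) := by
              rw [← pow_succ']
              congr 1
              omega
          _ ≤ 2 * Sn := by omega
      have h3 : ((2:ℝ))^r ≤ 2 * (Sn:ℝ) := by exact_mod_cast h2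
      have h4 : (Sn:ℝ) < 64/ε + 1 := Nat.ceil_lt_add_one (by positivity)
      have h5 : (1:ℝ) ≤ 64/ε := by linarith
      have h6 : (1:ℝ) ≤ 1/ε := hεinv1
      have h7 : (2:ℝ) ≤ 2/ε := by
        rw [le_div_iff₀ hε]
        nlinarith
      calc (2:ℝ)^r ≤ 2 * (Sn:ℝ) := h3
        _ < 2 * (64/ε + 1) := by linarith
        _ = 128/ε + 2 := by ring
        _ ≤ 128/ε + 2/ε := by linarith
        _ = 130/ε := by ring)
    have h2rpos : (0:ℝ) < (2:ℝ)^r := by positivity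
    have hq : ((2:ℝ)^r)⁻¹ ≤ ε/64 := by
      rw [inv_eq_one_div, div_le_div_iff₀ h2rpos (by norm_num : (0:ℝ) < 64)]
      calc (1:ℝ) * 64 = 64 := by ring
        _ ≤ ε * (2:ℝ)^r := by
            rw [← div_le_iff₀' hε]
            exact h2r_low
    -- r ≤ n - k
    have h130L : (130:ℝ) ≤ (2:ℝ)^(30:ℕ) * L := by nlinarith
    have hrnk : r ≤ n - k := by
      have hup : (2:ℝ)^r ≤ (2:ℝ)^(n-k) := by
        have hx : (1:ℝ)/ε ≤ (1/ε)^(2:ℕ) := by nlinarith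
        calc (2:ℝ)^r ≤ 130/ε := h2r_up
          _ = 130 * (1/ε) := by ring
          _ ≤ (2:ℝ)^(30:ℕ) * L * (1/ε) := by
              apply mul_le_mul_of_nonneg_right h130L (by positivity)
          _ ≤ (2:ℝ)^(30:ℕ) * L * ((1/ε)^(2:ℕ)) := by
              apply mul_le_mul_of_nonneg_left hx (by positivity)
          _ ≤ (2:ℝ)^(n-k) := hPnat
      have hnat : (2:ℕ)^r ≤ (2:ℕ)^(n-k) := by exact_mod_cast hup
      exact (Nat.pow_le_pow_iff_right (by norm_num)).mp hnat
    -- define d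
    set d : ℕ := n - k - r with hd
    have hn' : n = k + r + d := by omega
    have hdr : d + r = n - k := by omega
    have hd2 : (2:ℝ)^d * (2:ℝ)^r = (2:ℝ)^(n-k) := by
      rw [← pow_add, hdr]
    have h2dpos : (0:ℝ) < (2:ℝ)^d := by positivity
    -- key quantitative bound
    have hiq : ε/130 ≤ ((2:ℝ)^r)⁻¹ := by
      rw [inv_eq_one_div, div_le_div_iff₀ (by norm_num : (0:ℝ) < 130) h2rpos]
      have := (le_div_iff₀ hε).mp h2r_up
      linarith
    have hεm : (2:ℝ)^(22:ℕ) * L ≤ ε * (2:ℝ)^d := by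
      have hs1 : ((2:ℝ)^(30:ℕ) * L * (1/ε)^(2:ℕ)) * (ε/130)
          ≤ (2:ℝ)^(n-k) * ((2:ℝ)^r)⁻¹ :=
        mul_le_mul hPnat hiq (by positivity) (by positivity)
      have hs2 : ((2:ℝ)^(30:ℕ) * L * (1/ε)^(2:ℕ)) * (ε/130) * ε
          ≤ (2:ℝ)^(n-k) * ((2:ℝ)^r)⁻¹ * ε :=
        mul_le_mul_of_nonneg_right hs1 hε.le
      have hs3 : ((2:ℝ)^(30:ℕ) * L * (1/ε)^(2:ℕ)) * (ε/130) * ε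
          = (2:ℝ)^(30:ℕ) * L / 130 := by
        field_simp
      have hs4 : (2:ℝ)^(n-k) * ((2:ℝ)^r)⁻¹ * ε = ε * (2:ℝ)^d := by
        rw [← hd2]
        field_simp
      have hs5 : (2:ℝ)^(22:ℕ) * L ≤ (2:ℝ)^(30:ℕ) * L / 130 := by
        nlinarith
      rw [hs3] at hs2
      rw [hs4] at hs2
      linarith
    have hεd1 : ε * (2:ℝ)^d ≤ (2:ℝ)^d := mul_le_of_le_one_left h2dpos.le hε1.le
    -- the union-bound hypothesis
    have hlog2 : Real.log 2 < 0.6931471808 := Real.log_two_lt_d9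
    have hlog2pos : (0:ℝ) < Real.log 2 := Real.log_pos one_lt_two
    have hexpm1 : Real.exp (-1) < 1/2 := by
      have h1 : Real.exp (-1) = (Real.exp 1)⁻¹ := Real.exp_neg 1
      have h2 := Real.exp_one_gt_d9
      rw [h1, inv_lt_comm₀ (by positivity) (by norm_num)]
      linarith
    have hterm1 : (F.card : ℝ) * 2^k * Real.exp (-(ε * (2:ℝ)^d)/7) < 1/2 := by
      have hFck : (F.card : ℝ) * 2^k ≤ (2:ℝ)^(2*L) := by
        have e1 : (F.card : ℝ) = (2:ℝ)^(Real.logb 2 (F.card:ℝ)) :=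
          (Real.rpow_logb (by norm_num) (by norm_num) hFc0).symm
        have e2 : ((2:ℝ)^k : ℝ) = (2:ℝ)^((k:ℕ):ℝ) := (Real.rpow_natCast 2 k).symm
        rw [e1, e2, ← Real.rpow_add (by norm_num)]
        apply Real.rpow_le_rpow_of_exponent_le one_le_two
        have hkn : (k:ℝ) ≤ (n:ℝ) := by exact_mod_cast hkltn.le
        rw [hL] at *
        linarith [hlogFc]
      have h2L : (2:ℝ)^(2*L) = Real.exp (Real.log 2 * (2*L)) :=
        Real.rpow_def_of_pos (by norm_num) _
      calc (F.card : ℝ) * 2^k * Real.exp (-(ε * (2:ℝ)^d)/7)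
          ≤ (2:ℝ)^(2*L) * Real.exp (-(ε * (2:ℝ)^d)/7) :=
            mul_le_mul_of_nonneg_right hFck (Real.exp_pos _).le
        _ = Real.exp (Real.log 2 * (2*L) - (ε * (2:ℝ)^d)/7) := by
            rw [h2L, ← Real.exp_add]
            ring_nf
        _ ≤ Real.exp (-1) := by
            apply Real.exp_le_exp.mpr
            have : (2:ℝ)^(22:ℕ) * L / 7 ≤ (ε * (2:ℝ)^d)/7 := by linarith
            nlinarith
        _ < 1/2 := hexpm1
    have hterm2 : ((2:ℝ)^k) * Real.exp (-((2:ℝ)^d)/8) < 1/2 := by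
      have hk2 : ((2:ℝ)^k : ℝ) ≤ (2:ℝ)^(L) := by
        rw [← Real.rpow_natCast 2 k]
        apply Real.rpow_le_rpow_of_exponent_le one_le_two
        have hkn : (k:ℝ) ≤ (n:ℝ) := by exact_mod_cast hkltn.le
        rw [hL] at *
        linarith [hlogFc]
      have h1L : (2:ℝ)^(L:ℝ) = Real.exp (Real.log 2 * L) :=
        Real.rpow_def_of_pos (by norm_num) _
      calc ((2:ℝ)^k) * Real.exp (-((2:ℝ)^d)/8)
          ≤ (2:ℝ)^(L:ℝ) * Real.exp (-((2:ℝ)^d)/8) :=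
            mul_le_mul_of_nonneg_right hk2 (Real.exp_pos _).le
        _ = Real.exp (Real.log 2 * L - ((2:ℝ)^d)/8) := by
            rw [h1L, ← Real.exp_add]
            ring_nf
        _ ≤ Real.exp (-1) := by
            apply Real.exp_le_exp.mpr
            have h8 : (2:ℝ)^(22:ℕ) * L / 8 ≤ ((2:ℝ)^d)/8 := by linarith
            nlinarith
        _ < 1/2 := hexpm1
    have hbig : (F.card : ℝ) * 2^k * Real.exp (-(ε * (2:ℝ)^d)/7)
        + (2^k : ℝ) * Real.exp (-((2:ℝ)^d)/8) < 1 := by linarith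
    obtain ⟨Cs, hCs⟩ := construction hn' F hFb ε hε hq hbig
    refine ⟨Cs, hCs, ?_⟩
    apply nm_of_bot
    intro f hf s
    exact hCs f (by exact_mod_cast hf) s
end

section
/- There is an absolute constant C such that the following holds. Let n be a positive integer, α ∈ (0,1] with αn an integer, and T ⊆ [n] with |T| = αn. Let F_T be the family of all functions f : {0,1}^n → {0,1}^n of the form f(x) = (g(x_T), x_{T̄}) for some g : {0,1}^{αn} → {0,1}^{αn}, where x_T is the restriction of x to the coordinates in T and x_{T̄} its restriction to the complement. Set δ_0 = C (log n)/n. Then for every δ ∈ [δ_0, α], every coding scheme with block length n and message length k with rate k/n ≥ 1 − α + δ that is non-malleable with respect to F_T with error ε must satisfy ε ≥ δ/(16α). -/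
open Finset

/-- The family `F_T` of tampering functions acting only on the coordinates in `T`:
`f(x) = (g(x_T), x_{T̄})`, i.e., `f` leaves coordinates outside `T` unchanged and
the coordinates of `f(x)` inside `T` depend only on the coordinates of `x` in `T`. -/
def ActsOn {n : ℕ} (T : Finset (Fin n)) : Set (Word n → Word n) :=
  {f | (∀ x : Word n, ∀ i ∉ T, f x i = x i) ∧
       (∀ x y : Word n, (∀ i ∈ T, x i = y i) → ∀ i ∈ T, f x i = f y i)}

-- ==== helpers ====
section NMHelpers

variable {n k : ℕ}

lemma sum_decDist (C : CodingScheme n k) (f : Word n → Word n) (s : Msg k) :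
    ∑ y, decDist C f s y = 1 := by
  unfold decDist
  rw [Finset.sum_comm]
  have h : ∀ x ∈ (univ : Finset (Word n)),
      (∑ y, if C.dec (f x) = y then C.enc s x else 0) = C.enc s x := by
    intro x _
    rw [Finset.sum_ite_eq]
    simp
  rw [Finset.sum_congr rfl h, C.enc_sum]

lemma sum_copyDist (D : NMVal k → ℝ) (hD : ∑ v, D v = 1) (s : Msg k) :
    ∑ y, copyDist D s y = 1 := by
  unfold copyDist
  rw [Finset.sum_comm]
  have h : ∀ v ∈ (univ : Finset (NMVal k)),
      (∑ y, if copyFn v s = y then D v else 0) = D v := by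
    intro v _
    rw [Finset.sum_ite_eq]
    simp
  rw [Finset.sum_congr rfl h, hD]

lemma statDist_nonneg' {β : Type*} [Fintype β] (P Q : β → ℝ) : 0 ≤ statDist P Q := by
  unfold statDist
  apply div_nonneg _ (by norm_num)
  exact Finset.sum_nonneg fun y _ => abs_nonneg _

lemma statDist_point {β : Type*} [Fintype β] {P Q : β → ℝ} (hP : ∑ y, P y = 1)
    (hQ : ∑ y, Q y = 1) {ε : ℝ} (h : statDist P Q ≤ ε) (y : β) : |P y - Q y| ≤ ε := by
  classical
  have hsum : ∑ y', (P y' - Q y') = 0 := by rw [Finset.sum_sub_distrib, hP, hQ]; ring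
  have h2 := Finset.sum_erase_add univ (fun y' => P y' - Q y') (mem_univ y)
  have he : ∑ y' ∈ univ.erase y, (P y' - Q y') = -(P y - Q y) := by
    linarith [hsum, h2]
  have h3 : |∑ y' ∈ univ.erase y, (P y' - Q y')| ≤ ∑ y' ∈ univ.erase y, |P y' - Q y'| :=
    Finset.abs_sum_le_sum_abs _ _
  have h4 := Finset.sum_erase_add univ (fun y' => |P y' - Q y'|) (mem_univ y)
  rw [he, abs_neg] at h3
  have h5 : statDist P Q = (∑ y', |P y' - Q y'|) / 2 := rfl
  linarith

lemma copyDist_some (D : NMVal k → ℝ) (s u : Msg k) :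
    copyDist D s (some u) = (if s = u then D none else 0) + D (some (some u)) := by
  unfold copyDist
  rw [Fintype.sum_option]
  congr 1
  · simp [copyFn]
  · have : ∀ v : Option (Msg k),
        (if copyFn (some v) s = some u then D (some v) else 0)
          = (if v = some u then D (some v) else 0) := by
      intro v; simp [copyFn]; congr
    rw [Finset.sum_congr rfl (fun v _ => this v), Finset.sum_ite_eq']
    simp

lemma exists_enc_pos (C : CodingScheme n k) (s : Msg k) : ∃ x, 0 < C.enc s x := by
  by_contra h
  push_neg at h
  have : ∑ x, C.enc s x = 0 :=
    Finset.sum_eq_zero fun x _ => le_antisymm (h x) (C.enc_nonneg s x)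
  rw [C.enc_sum] at this
  norm_num at this

lemma card_padded (n : ℕ) (T : Finset (Fin n)) :
    (univ.filter (fun y : Word n => ∀ i ∈ T, y i = false)).card = 2 ^ (n - T.card) := by
  classical
  have e : {y : Word n // ∀ i ∈ T, y i = false} ≃ ({ i // i ∈ Tᶜ } → Bool) :=
  { toFun := fun y i => y.1 i.1
    invFun := fun g => ⟨fun i => if h : i ∈ Tᶜ then g ⟨i, h⟩ else false, by
      intro i hi
      have hni : i ∉ Tᶜ := by simp [Finset.mem_compl, hi]
      simp [hni]⟩
    left_inv := by
      rintro ⟨y, hy⟩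
      ext i
      by_cases h : i ∈ Tᶜ
      · simp [h]
      · have hiT : i ∈ T := by simpa [Finset.mem_compl] using h
        simp [h, hy i hiT]
    right_inv := by
      intro g
      funext i
      simp [i.2] }
  have h1 : (univ.filter (fun y : Word n => ∀ i ∈ T, y i = false)).card
      = Fintype.card {y : Word n // ∀ i ∈ T, y i = false} := (Fintype.card_subtype _).symm
  rw [h1, Fintype.card_congr e, Fintype.card_fun]
  have : Fintype.card { i // i ∈ Tᶜ } = Tᶜ.card := Fintype.card_coe Tᶜ
  rw [this, Finset.card_compl]
  simp

end NMHelpers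

def restrW {n : ℕ} (T : Finset (Fin n)) (x : Word n) : Word n :=
  fun i => if i ∈ T then x i else false

def outerW {n : ℕ} (T : Finset (Fin n)) (x : Word n) : Word n :=
  fun i => if i ∈ T then false else x i

def spliceW {n : ℕ} (T : Finset (Fin n)) (w x : Word n) : Word n :=
  fun i => if i ∈ T then w i else x i

def predW {n k : ℕ} (C : CodingScheme n k) (T : Finset (Fin n)) (s : Msg k) (x : Word n) : Prop :=
  ∃ x', 0 < C.enc s x' ∧ restrW T x' = restrW T x

open scoped Classical in
noncomputable def keepF {n k : ℕ} (C : CodingScheme n k) (T : Finset (Fin n)) (w : Word n)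
    (s : Msg k) : Word n → Word n :=
  fun x => if predW C T s x then x else spliceW T w x

noncomputable def qv {n k : ℕ} (C : CodingScheme n k) (T : Finset (Fin n)) (w : Word n)
    (s2 s : Msg k) : ℝ :=
  ∑ x, if C.dec (spliceW T w x) = some s then C.enc s2 x else 0

open scoped Classical in
noncomputable def muv {n k : ℕ} (C : CodingScheme n k) (T : Finset (Fin n))
    (s2 s : Msg k) : ℝ :=
  ∑ x, if predW C T s x then C.enc s2 x else 0

section NMHelpers2
variable {n k : ℕ}

lemma keepF_self {C : CodingScheme n k} {T : Finset (Fin n)} {w : Word n} {s : Msg k}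
    {x : Word n} (h : 0 < C.enc s x) : keepF C T w s x = x := by
  unfold keepF
  rw [if_pos ⟨x, h, rfl⟩]

lemma keepF_mem (C : CodingScheme n k) (T : Finset (Fin n)) (w : Word n) (s : Msg k) :
    keepF C T w s ∈ ActsOn T := by
  classical
  constructor
  · intro x i hi
    unfold keepF
    split
    · rfl
    · simp [spliceW, hi]
  · intro x y hxy i hiT
    have hres : restrW T x = restrW T y := by
      funext j
      unfold restrW
      by_cases hj : j ∈ T
      · simp [hj, hxy j hj]
      · simp [hj]
    have hpred : predW C T s x ↔ predW C T s y := by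
      unfold predW; rw [hres]
    unfold keepF
    by_cases hp : predW C T s x
    · rw [if_pos hp, if_pos (hpred.mp hp)]
      exact hxy i hiT
    · rw [if_neg hp, if_neg (fun hq => hp (hpred.mpr hq))]
      simp [spliceW, hiT]

lemma qv_nonneg (C : CodingScheme n k) (T : Finset (Fin n)) (w : Word n) (s2 s : Msg k) :
    0 ≤ qv C T w s2 s := by
  apply Finset.sum_nonneg
  intro x _
  split
  · exact C.enc_nonneg s2 x
  · exact le_refl 0

lemma nm_eps_nonneg {C : CodingScheme n k} {T : Finset (Fin n)} {ε : ℝ}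
    (h : NonMalleable C (ActsOn T) ε) : 0 ≤ ε := by
  have hid : (fun x : Word n => x) ∈ ActsOn T := ⟨fun x i _ => rfl, fun x y h i hi => h i hi⟩
  obtain ⟨D, _, hc⟩ := h _ hid
  exact le_trans (statDist_nonneg' _ _) (hc fun _ => false)

end NMHelpers2

section NMCount
variable {n k : ℕ}

open scoped Classical in
lemma card_predW_le (C : CodingScheme n k) (T : Finset (Fin n)) (x : Word n) :
    (univ.filter (fun s : Msg k => predW C T s x)).card ≤ 2 ^ (n - T.card) := by
  rw [← card_padded n T]
  refine Finset.card_le_card_of_injOn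
    (fun s => if h : predW C T s x then outerW T h.choose else (fun _ => false)) ?_ ?_
  · intro s hs
    have hp : predW C T s x := (Finset.mem_filter.mp hs).2
    dsimp only
    rw [dif_pos hp]
    refine Finset.mem_coe.mpr (Finset.mem_filter.mpr ⟨Finset.mem_univ _, ?_⟩)
    intro i hi
    simp [outerW, hi]
  · intro s1 hs1 s2 hs2 hF
    have h1 : predW C T s1 x := (Finset.mem_filter.mp (Finset.mem_coe.mp hs1)).2
    have h2 : predW C T s2 x := (Finset.mem_filter.mp (Finset.mem_coe.mp hs2)).2
    dsimp only at hF
    rw [dif_pos h1, dif_pos h2] at hF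
    obtain ⟨hpos1, hr1⟩ := h1.choose_spec
    obtain ⟨hpos2, hr2⟩ := h2.choose_spec
    have hxeq : h1.choose = h2.choose := by
      funext i
      by_cases hi : i ∈ T
      · have e1 := congrFun hr1 i
        have e2 := congrFun hr2 i
        simp only [restrW, if_pos hi] at e1 e2
        rw [e1, e2]
      · have e3 := congrFun hF i
        simpa [outerW, hi] using e3
    have d1 := C.dec_enc s1 _ hpos1
    have d2 := C.dec_enc s2 _ hpos2
    rw [hxeq, d2] at d1
    exact (Option.some_inj.mp d1).symm

open scoped Classical in
lemma sum_muv_le (C : CodingScheme n k) (T : Finset (Fin n)) (s2 : Msg k) :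
    (∑ s, muv C T s2 s) ≤ (2:ℝ) ^ (n - T.card) := by
  unfold muv
  rw [Finset.sum_comm]
  have hx : ∀ x ∈ (univ : Finset (Word n)),
      (∑ s : Msg k, if predW C T s x then C.enc s2 x else 0)
        ≤ (2:ℝ) ^ (n - T.card) * C.enc s2 x := by
    intro x _
    rw [← Finset.sum_filter, Finset.sum_const, nsmul_eq_mul]
    apply mul_le_mul_of_nonneg_right _ (C.enc_nonneg s2 x)
    calc ((univ.filter (fun s : Msg k => predW C T s x)).card : ℝ)
        ≤ ((2 ^ (n - T.card) : ℕ) : ℝ) := by exact_mod_cast card_predW_le C T x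
      _ = (2:ℝ) ^ (n - T.card) := by push_cast; ring
  calc (∑ x, ∑ s : Msg k, if predW C T s x then C.enc s2 x else 0)
      ≤ ∑ x, (2:ℝ) ^ (n - T.card) * C.enc s2 x := Finset.sum_le_sum hx
    _ = (2:ℝ) ^ (n - T.card) := by rw [← Finset.mul_sum, C.enc_sum, mul_one]

lemma sum_qv_le_one (C : CodingScheme n k) (T : Finset (Fin n)) (w : Word n) (s2 : Msg k) :
    (∑ s, qv C T w s2 s) ≤ 1 := by
  unfold qv
  rw [Finset.sum_comm]
  calc (∑ x, ∑ s : Msg k, if C.dec (spliceW T w x) = some s then C.enc s2 x else 0)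
      ≤ ∑ x, C.enc s2 x := by
        refine Finset.sum_le_sum fun x _ => ?_
        cases hdx : C.dec (spliceW T w x) with
        | none => simpa using C.enc_nonneg s2 x
        | some st =>
          simp only [Option.some.injEq]
          rw [Finset.sum_ite_eq]
          simp
    _ = 1 := C.enc_sum s2

lemma sum_qv_diag_le (C : CodingScheme n k) (T : Finset (Fin n)) (w : Word n) :
    (∑ s2, qv C T w s2 s2) ≤ (2:ℝ) ^ (n - T.card) := by
  classical
  unfold qv
  rw [Finset.sum_comm]
  rw [← Finset.sum_fiberwise univ (outerW T)
      (fun x => ∑ s2 : Msg k, if C.dec (spliceW T w x) = some s2 then C.enc s2 x else 0)]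
  have hz : ∀ z ∈ (univ : Finset (Word n)),
      (∑ x ∈ univ.filter (fun x => outerW T x = z),
        ∑ s2 : Msg k, if C.dec (spliceW T w x) = some s2 then C.enc s2 x else 0)
      ≤ (if (∀ i ∈ T, z i = false) then (1:ℝ) else 0) := by
    intro z _
    by_cases hzp : ∀ i ∈ T, z i = false
    · rw [if_pos hzp]
      have hsp : ∀ x ∈ univ.filter (fun x => outerW T x = z),
          spliceW T w x = spliceW T w z := by
        intro x hx
        have hxz : outerW T x = z := (Finset.mem_filter.mp hx).2
        funext i
        by_cases hi : i ∈ T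
        · simp [spliceW, hi]
        · have e := congrFun hxz i
          simp only [outerW, if_neg hi] at e
          simp [spliceW, hi, e]
      cases hdz : C.dec (spliceW T w z) with
      | none =>
        have h0 : (∑ x ∈ univ.filter (fun x => outerW T x = z),
            ∑ s2 : Msg k, if C.dec (spliceW T w x) = some s2 then C.enc s2 x else 0) = 0 := by
          refine Finset.sum_eq_zero fun x hx => ?_
          refine Finset.sum_eq_zero fun s2 _ => ?_
          rw [hsp x hx, hdz]
          simp
        rw [h0]; norm_num
      | some st =>
        have heach : ∀ x ∈ univ.filter (fun x => outerW T x = z),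
            (∑ s2 : Msg k, if C.dec (spliceW T w x) = some s2 then C.enc s2 x else 0)
              = C.enc st x := by
          intro x hx
          rw [show C.dec (spliceW T w x) = some st from by rw [hsp x hx, hdz]]
          simp only [Option.some.injEq]
          rw [Finset.sum_ite_eq]
          simp
        rw [Finset.sum_congr rfl heach]
        calc (∑ x ∈ univ.filter (fun x => outerW T x = z), C.enc st x)
            ≤ ∑ x, C.enc st x :=
              Finset.sum_le_sum_of_subset_of_nonneg (Finset.filter_subset _ _)
                (fun x _ _ => C.enc_nonneg st x)
          _ = 1 := C.enc_sum st
    · rw [if_neg hzp]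
      apply le_of_eq
      refine Finset.sum_eq_zero fun x hx => ?_
      exfalso
      have hxz : outerW T x = z := (Finset.mem_filter.mp hx).2
      push_neg at hzp
      obtain ⟨i, hiT, hzi⟩ := hzp
      have e := congrFun hxz i
      simp only [outerW, if_pos hiT] at e
      exact hzi e.symm
  calc (∑ z, ∑ x ∈ univ.filter (fun x => outerW T x = z),
        ∑ s2 : Msg k, if C.dec (spliceW T w x) = some s2 then C.enc s2 x else 0)
      ≤ ∑ z : Word n, (if (∀ i ∈ T, z i = false) then (1:ℝ) else 0) := Finset.sum_le_sum hz
    _ = ((univ.filter (fun z : Word n => ∀ i ∈ T, z i = false)).card : ℝ) := by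
        rw [Finset.sum_boole]
    _ = (2:ℝ) ^ (n - T.card) := by rw [card_padded n T]; push_cast; ring

end NMCount

section NMKey
variable {n k : ℕ}

open scoped Classical in
lemma key_ineq (C : CodingScheme n k) (T : Finset (Fin n)) (w : Word n) {ε : ℝ}
    (hNM : NonMalleable C (ActsOn T) ε) (hε0 : 0 ≤ ε) (s s2 : Msg k) :
    (1:ℝ) ≤ 3*ε + muv C T s2 s + qv C T w s2 s2 + qv C T w s2 s := by
  by_cases hss : s2 = s
  · subst hss
    have hμ1 : muv C T s2 s2 = 1 := by
      unfold muv
      rw [← C.enc_sum s2]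
      refine Finset.sum_congr rfl fun x _ => ?_
      rcases lt_or_eq_of_le (C.enc_nonneg s2 x) with hpos | heq
      · rw [if_pos ⟨x, hpos, rfl⟩]
      · rw [← heq]; simp
    have hq1 := qv_nonneg C T w s2 s2
    linarith
  · obtain ⟨D, ⟨hDnn, hDsum⟩, hclose⟩ := hNM (keepF C T w s) (keepF_mem C T w s)
    have hone : decDist C (keepF C T w s) s (some s) = 1 := by
      unfold decDist
      rw [← C.enc_sum s]
      refine Finset.sum_congr rfl fun x _ => ?_
      rcases lt_or_eq_of_le (C.enc_nonneg s x) with hpos | heq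
      · rw [keepF_self hpos, C.dec_enc s x hpos, if_pos rfl]
      · rw [← heq]; simp
    have hA : decDist C (keepF C T w s) s2 (some s2) ≤ muv C T s2 s + qv C T w s2 s2 := by
      unfold decDist muv qv
      rw [← Finset.sum_add_distrib]
      refine Finset.sum_le_sum fun x _ => ?_
      by_cases hp : predW C T s x
      · rw [show keepF C T w s x = x from by unfold keepF; rw [if_pos hp], if_pos hp]
        have h2 : (if C.dec x = some s2 then C.enc s2 x else 0) ≤ C.enc s2 x := by
          split
          · exact le_rfl
          · exact C.enc_nonneg s2 x
        have h3 : (0:ℝ) ≤ (if C.dec (spliceW T w x) = some s2 then C.enc s2 x else 0) := by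
          split
          · exact C.enc_nonneg s2 x
          · exact le_rfl
        linarith
      · rw [show keepF C T w s x = spliceW T w x from by unfold keepF; rw [if_neg hp], if_neg hp]
        simp
    have hB : decDist C (keepF C T w s) s2 (some s) ≤ qv C T w s2 s := by
      unfold decDist qv
      refine Finset.sum_le_sum fun x _ => ?_
      by_cases hp : predW C T s x
      · rw [show keepF C T w s x = x from by unfold keepF; rw [if_pos hp]]
        have h3 : (0:ℝ) ≤ (if C.dec (spliceW T w x) = some s then C.enc s2 x else 0) := by
          split
          · exact C.enc_nonneg s2 x
          · exact le_rfl
        rcases lt_or_eq_of_le (C.enc_nonneg s2 x) with hpos | heq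
        · rw [C.dec_enc s2 x hpos, if_neg (by simpa using hss)]
          exact h3
        · rw [← heq]
          simpa using h3
      · rw [show keepF C T w s x = spliceW T w x from by unfold keepF; rw [if_neg hp]]
    have hPa := statDist_point (sum_decDist C _ s) (sum_copyDist D hDsum s) (hclose s) (some s)
    have hPb := statDist_point (sum_decDist C _ s2) (sum_copyDist D hDsum s2) (hclose s2) (some s2)
    have hPc := statDist_point (sum_decDist C _ s2) (sum_copyDist D hDsum s2) (hclose s2) (some s)
    rw [copyDist_some, hone, if_pos rfl] at hPa
    rw [copyDist_some, if_pos rfl] at hPb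
    rw [copyDist_some, if_neg hss] at hPc
    have ha := abs_le.mp hPa
    have hb := abs_le.mp hPb
    have hc := abs_le.mp hPc
    have hDs2 : 0 ≤ D (some (some s2)) := hDnn _
    linarith [ha.1, hb.2, hc.2, hA, hB]

end NMKey


set_option maxHeartbeats 1000000 in
/-- There is an absolute constant `C` such that for every `n`,
`α ∈ (0,1]` with `αn = |T|` for a set `T ⊆ [n]`, and every `δ ∈ [C log n / n, α]`:
any coding scheme with block length `n`, message length `k`, rate `k/n ≥ 1 − α + δ`
that is non-malleable w.r.t. `F_T` with error `ε` satisfies `ε ≥ δ/(16α)`. -/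
theorem subset_tampering_rate_upper_bound :
    ∃ C : ℝ, 0 < C ∧
    ∀ n : ℕ, 1 ≤ n → ∀ α : ℝ, 0 < α → α ≤ 1 →
    ∀ T : Finset (Fin n), (T.card : ℝ) = α * (n : ℝ) →
    ∀ δ : ℝ, C * Real.logb 2 (n : ℝ) / (n : ℝ) ≤ δ → δ ≤ α →
    ∀ k : ℕ, ∀ Cs : CodingScheme n k, 1 - α + δ ≤ (k : ℝ) / (n : ℝ) →
    ∀ ε : ℝ, NonMalleable Cs (ActsOn T) ε →
      δ / (16 * α) ≤ ε := by
  classical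
  refine ⟨2, by norm_num, ?_⟩
  intro n hn α hα0 hα1 T hT δ hδ0 hδα k Cs hrate ε hNM
  have hε0 : 0 ≤ ε := nm_eps_nonneg hNM
  have hnR : (0:ℝ) < n := by exact_mod_cast hn
  have htn : T.card ≤ n := by
    calc T.card ≤ Fintype.card (Fin n) := Finset.card_le_univ T
      _ = n := Fintype.card_fin n
  rcases Nat.lt_or_ge n 2 with hn1 | hn2
  · -- case n = 1
    have hn1' : n = 1 := le_antisymm (Nat.lt_succ_iff.mp hn1) hn
    subst hn1'
    have hTc1 : T.card = 1 := by
      have h1 : (0:ℝ) < (T.card : ℝ) := by rw [hT]; push_cast; nlinarith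
      have h2 : 1 ≤ T.card := by exact_mod_cast Nat.cast_pos.mp h1
      omega
    have hαeq : α = 1 := by
      have := hT
      rw [hTc1] at this
      push_cast at this
      linarith
    have hTuniv : T = univ := Finset.eq_univ_of_card T (by simp [hTc1])
    rcases Nat.eq_zero_or_pos k with hk0 | hk1
    · subst hk0
      have hδle : δ ≤ 0 := by
        rw [hαeq] at hrate
        push_cast at hrate
        linarith
      have : δ / (16 * α) ≤ 0 :=
        div_nonpos_of_nonpos_of_nonneg hδle (by linarith)
      linarith
    · -- k ≥ 1 forces k = 1
      have hkle : k = 1 := by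
        have hinj : Function.Injective (fun s : Msg k => (exists_enc_pos Cs s).choose) := by
          intro s1 s2 h
          have h1 := Cs.dec_enc s1 _ (exists_enc_pos Cs s1).choose_spec
          have h2 := Cs.dec_enc s2 _ (exists_enc_pos Cs s2).choose_spec
          simp only at h
          rw [h, h2] at h1
          exact (Option.some_inj.mp h1).symm
        have hcard := Fintype.card_le_of_injective _ hinj
        rw [Fintype.card_fun, Fintype.card_fun] at hcard
        simp only [Fintype.card_fin, Fintype.card_bool] at hcard
        have : k ≤ 1 := by
          by_contra hgt
          push_neg at hgt
          have : 2^2 ≤ 2^k := Nat.pow_le_pow_right (by norm_num) hgt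
          omega
        omega
      subst hkle
      set s0 : Msg 1 := fun _ => false with hs0def
      set s1 : Msg 1 := fun _ => true with hs1def
      have hs01 : s0 ≠ s1 := by
        intro h
        have := congrFun h 0
        simp [hs0def, hs1def] at this
      obtain ⟨x0, hx0⟩ := exists_enc_pos Cs s0
      obtain ⟨x1, hx1⟩ := exists_enc_pos Cs s1
      have hd0 : Cs.dec x0 = some s0 := Cs.dec_enc _ _ hx0
      have hd1 : Cs.dec x1 = some s1 := Cs.dec_enc _ _ hx1
      have hx01 : x0 ≠ x1 := by
        intro h
        rw [h, hd1] at hd0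
        exact hs01 (Option.some_inj.mp hd0).symm
      have hb01 : x0 0 ≠ x1 0 := by
        intro h
        apply hx01
        funext i
        have hi : i = 0 := Subsingleton.elim i 0
        rw [hi, h]
      have hall : ∀ z : Word 1, z = x0 ∨ z = x1 := by
        intro z
        by_cases hz : z 0 = x0 0
        · left
          funext i
          have hi : i = 0 := Subsingleton.elim i 0
          rw [hi, hz]
        · right
          funext i
          have hi : i = 0 := Subsingleton.elim i 0
          rw [hi]
          revert hz hb01
          cases z 0 <;> cases x0 0 <;> cases x1 0 <;> simp
      set f : Word 1 → Word 1 := fun x i => !(x i) with hfdef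
      have hf : f ∈ ActsOn T := by
        constructor
        · intro x i hi
          exact absurd (hTuniv ▸ mem_univ i) hi
        · intro x y hxy i hi
          simp [hfdef, hxy i hi]
      have hfx0 : f x0 = x1 := by
        funext i
        have hi : i = 0 := Subsingleton.elim i 0
        rw [hi]
        simp only [hfdef]
        revert hb01
        cases x0 0 <;> cases x1 0 <;> simp
      have hfx1 : f x1 = x0 := by
        funext i
        have hi : i = 0 := Subsingleton.elim i 0
        rw [hi]
        simp only [hfdef]
        revert hb01
        cases x0 0 <;> cases x1 0 <;> simp
      have hdec0 : decDist Cs f s0 (some s1) = 1 := by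
        unfold decDist
        rw [← Cs.enc_sum s0]
        refine Finset.sum_congr rfl fun x _ => ?_
        rcases lt_or_eq_of_le (Cs.enc_nonneg s0 x) with hpos | heq
        · have hdx : Cs.dec x = some s0 := Cs.dec_enc _ _ hpos
          have hxx : x = x0 := by
            rcases hall x with h | h
            · exact h
            · exfalso
              rw [h, hd1] at hdx
              exact hs01 (Option.some_inj.mp hdx).symm
          rw [hxx, hfx0, hd1, if_pos rfl]
        · rw [← heq]; simp
      have hdec1 : decDist Cs f s1 (some s0) = 1 := by
        unfold decDist
        rw [← Cs.enc_sum s1]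
        refine Finset.sum_congr rfl fun x _ => ?_
        rcases lt_or_eq_of_le (Cs.enc_nonneg s1 x) with hpos | heq
        · have hdx : Cs.dec x = some s1 := Cs.dec_enc _ _ hpos
          have hxx : x = x1 := by
            rcases hall x with h | h
            · exfalso
              rw [h, hd0] at hdx
              exact hs01 (Option.some_inj.mp hdx)
            · exact h
          rw [hxx, hfx1, hd0, if_pos rfl]
        · rw [← heq]; simp
      obtain ⟨D, ⟨hDnn, hDsum⟩, hclose⟩ := hNM f hf
      have hP0 := statDist_point (sum_decDist Cs f s0) (sum_copyDist D hDsum s0)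
        (hclose s0) (some s1)
      have hP1 := statDist_point (sum_decDist Cs f s1) (sum_copyDist D hDsum s1)
        (hclose s1) (some s0)
      rw [hdec0, copyDist_some, if_neg hs01] at hP0
      rw [hdec1, copyDist_some, if_neg (Ne.symm hs01)] at hP1
      have h1' := abs_le.mp hP0
      have h2' := abs_le.mp hP1
      have hpair : D (some (some s0)) + D (some (some s1)) ≤ 1 := by
        have hne : (some (some s0) : NMVal 1) ≠ some (some s1) := by
          simpa using hs01
        have hsub := Finset.sum_le_sum_of_subset_of_nonneg
          (Finset.subset_univ ({some (some s0), some (some s1)} : Finset (NMVal 1)))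
          (fun v _ _ => hDnn v)
        rw [Finset.sum_pair hne, hDsum] at hsub
        exact hsub
      have hεhalf : (1:ℝ)/2 ≤ ε := by linarith
      rw [hαeq]
      rw [div_le_iff₀ (by norm_num : (0:ℝ) < 16 * 1)]
      nlinarith [hδα, hαeq]
  · -- main case n ≥ 2
    have hlog : (1:ℝ) ≤ Real.logb 2 n := by
      have h2n : (2:ℝ) ≤ n := by exact_mod_cast hn2
      calc (1:ℝ) = Real.logb 2 2 := (Real.logb_self_eq_one (by norm_num)).symm
        _ ≤ Real.logb 2 n := Real.logb_le_logb_of_le (by norm_num) (by norm_num) h2n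
    have hδn : (2:ℝ) ≤ δ * n := by
      rw [div_le_iff₀ hnR] at hδ0
      nlinarith
    have hrate' : (1 - α + δ) * n ≤ (k:ℝ) := by
      rw [le_div_iff₀ hnR] at hrate
      exact hrate
    have hkm : n - T.card + 2 ≤ k := by
      have hexp : (1 - α + δ) * n = (n:ℝ) - α*n + δ*n := by ring
      have hkR : ((n - T.card : ℕ) : ℝ) + 2 ≤ (k:ℝ) := by
        rw [Nat.cast_sub htn, hT]
        linarith [hexp ▸ hrate']
      exact_mod_cast hkR
    have hcard : ((Fintype.card (Msg k) : ℕ) : ℝ) = (2:ℝ)^k := by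
      rw [Fintype.card_fun, Fintype.card_bool, Fintype.card_fin]
      push_cast
      ring
    have hKpos : (0:ℝ) < (2:ℝ)^k := by positivity
    have hM1 : (1:ℝ) ≤ (2:ℝ)^(n - T.card) := one_le_pow₀ (by norm_num)
    have h4M : (4:ℝ) * (2:ℝ)^(n - T.card) ≤ (2:ℝ)^k := by
      calc (4:ℝ) * (2:ℝ)^(n - T.card) = (2:ℝ)^(n - T.card + 2) := by rw [pow_add]; ring
        _ ≤ (2:ℝ)^k := pow_le_pow_right₀ (by norm_num) hkm
    set w0 : Word n := fun _ => false with hw0def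
    have SC : ∀ c : ℝ, (∑ _s : Msg k, c) = (2:ℝ)^k * c := by
      intro c
      rw [Finset.sum_const, Finset.card_univ, nsmul_eq_mul, hcard]
    have hL : (∑ _s : Msg k, ∑ _s2 : Msg k, (1:ℝ)) = (2:ℝ)^k * (2:ℝ)^k := by
      rw [SC 1, SC ((2:ℝ)^k * 1)]
      ring
    have hdbl := Finset.sum_le_sum (fun s (_ : s ∈ (univ : Finset (Msg k))) =>
      Finset.sum_le_sum (fun s2 (_ : s2 ∈ (univ : Finset (Msg k))) =>
        key_ineq Cs T w0 hNM hε0 s s2))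
    rw [hL] at hdbl
    have hsplit : (∑ s : Msg k, ∑ s2 : Msg k,
        (3*ε + muv Cs T s2 s + qv Cs T w0 s2 s2 + qv Cs T w0 s2 s))
        = (∑ _s : Msg k, ∑ _s2 : Msg k, 3*ε)
          + (∑ s : Msg k, ∑ s2 : Msg k, muv Cs T s2 s)
          + (∑ _s : Msg k, ∑ s2 : Msg k, qv Cs T w0 s2 s2)
          + (∑ s : Msg k, ∑ s2 : Msg k, qv Cs T w0 s2 s) := by
      simp only [Finset.sum_add_distrib]
    rw [hsplit] at hdbl
    have t0 : (∑ _s : Msg k, ∑ _s2 : Msg k, (3:ℝ)*ε) = (2:ℝ)^k * ((2:ℝ)^k * (3*ε)) := by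
      rw [SC (3*ε), SC ((2:ℝ)^k * (3*ε))]
    have t1 : (∑ s : Msg k, ∑ s2 : Msg k, muv Cs T s2 s) ≤ (2:ℝ)^k * (2:ℝ)^(n - T.card) := by
      rw [Finset.sum_comm]
      calc (∑ s2 : Msg k, ∑ s : Msg k, muv Cs T s2 s)
          ≤ ∑ _s2 : Msg k, (2:ℝ)^(n - T.card) :=
            Finset.sum_le_sum fun s2 _ => sum_muv_le Cs T s2
        _ = (2:ℝ)^k * (2:ℝ)^(n - T.card) := SC _
    have t2 : (∑ _s : Msg k, ∑ s2 : Msg k, qv Cs T w0 s2 s2)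
        ≤ (2:ℝ)^k * (2:ℝ)^(n - T.card) := by
      calc (∑ _s : Msg k, ∑ s2 : Msg k, qv Cs T w0 s2 s2)
          ≤ ∑ _s : Msg k, (2:ℝ)^(n - T.card) :=
            Finset.sum_le_sum fun s _ => sum_qv_diag_le Cs T w0
        _ = (2:ℝ)^k * (2:ℝ)^(n - T.card) := SC _
    have t3 : (∑ s : Msg k, ∑ s2 : Msg k, qv Cs T w0 s2 s) ≤ (2:ℝ)^k := by
      rw [Finset.sum_comm]
      calc (∑ s2 : Msg k, ∑ s : Msg k, qv Cs T w0 s2 s)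
          ≤ ∑ _s2 : Msg k, (1:ℝ) :=
            Finset.sum_le_sum fun s2 _ => sum_qv_le_one Cs T w0 s2
        _ = (2:ℝ)^k := by rw [SC 1, mul_one]
    rw [t0] at hdbl
    have hfinal : (2:ℝ)^k * (2:ℝ)^k ≤ (2:ℝ)^k * ((2:ℝ)^k * (3*ε))
        + (2:ℝ)^k * (2:ℝ)^(n - T.card) + (2:ℝ)^k * (2:ℝ)^(n - T.card) + (2:ℝ)^k := by
      linarith [hdbl, t1, t2, t3]
    clear hdbl t1 t2 t3 hsplit hL SC
    set K : ℝ := (2:ℝ)^k with hKdef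
    set Mq : ℝ := (2:ℝ)^(n - T.card) with hMqdef
    have e1 : K * Mq ≤ K * (K/4) := mul_le_mul_of_nonneg_left (by linarith) hKpos.le
    have e2 : K ≤ K * (K/4) := by nlinarith
    have hKK2 : (0:ℝ) < K * K := mul_pos hKpos hKpos
    have hε12 : (1:ℝ)/12 ≤ ε := by nlinarith [hfinal, e1, e2, hKK2]
    have hfin : δ / (16*α) ≤ 1/16 := by
      rw [div_le_iff₀ (by positivity : (0:ℝ) < 16*α)]
      linarith only [hδα]
    linarith only [hε12, hfin]
end

section
/- Let F be the family of split-state tampering functions on {0,1}^n: each f ∈ F interprets its input as a pair (x_1, x_2) with x_1 ∈ {0,1}^{⌈n/2⌉} and x_2 ∈ {0,1}^{⌊n/2⌋} and outputs (f_1(x_1), f_2(x_2)) for arbitrary functions f_1, f_2 on the respective input lengths. For every constant γ > 0 there exist a constant ε_0 > 0 and n_0 such that for all n ≥ n_0: any coding scheme with block length n that is non-malleable with respect to F with error ε ≤ ε_0 has rate at most 1/2 + γ. -/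
open Finset

/-- The family of split-state tampering functions on `{0,1}^n`: the first
`⌈n/2⌉ = (n+1)/2` bits of the output depend only on the first `⌈n/2⌉` bits of the
input, and the remaining `⌊n/2⌋` bits of the output depend only on the remaining
`⌊n/2⌋` bits of the input. -/
def SplitState (n : ℕ) : Set (Word n → Word n) :=
  {f | (∀ x y : Word n, (∀ i : Fin n, (i : ℕ) < (n + 1) / 2 → x i = y i) →
          ∀ i : Fin n, (i : ℕ) < (n + 1) / 2 → f x i = f y i) ∧
       (∀ x y : Word n, (∀ i : Fin n, (n + 1) / 2 ≤ (i : ℕ) → x i = y i) →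
          ∀ i : Fin n, (n + 1) / 2 ≤ (i : ℕ) → f x i = f y i)}

open scoped Classical

/-! ### Auxiliary material for the proof -/

lemma abs_sub_le_two_statDist {α : Type*} [Fintype α] (P Q : α → ℝ) (y : α) :
    |P y - Q y| ≤ 2 * statDist P Q := by
  have h1 : |P y - Q y| ≤ ∑ x, |P x - Q x| :=
    Finset.single_le_sum (fun x _ => abs_nonneg (P x - Q x)) (Finset.mem_univ y)
  have h2 : statDist P Q = (∑ x, |P x - Q x|) / 2 := rfl
  linarith

lemma copyDist_ne {k : ℕ} (D : NMVal k → ℝ) (s u : Msg k) (hsu : s ≠ u) :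
    copyDist D s (some u) = D (some (some u)) := by
  classical
  unfold copyDist
  rw [Finset.sum_eq_single (some (some u) : NMVal k)]
  · simp [copyFn]
  · intro v _ hv
    rcases v with _ | w
    · have : copyFn (none : NMVal k) s = some s := rfl
      rw [this, if_neg]
      intro hcon
      exact hsu (Option.some_inj.mp hcon)
    · have : copyFn (some w) s = w := rfl
      rw [this, if_neg]
      intro hcon
      exact hv (by rw [hcon])
  · intro hmem
    exact absurd (Finset.mem_univ _) hmem

/-- The left-half-membership predicate used in the tampering attack: `x` has the
same left half as some word in the support of `Enc(t)`. -/
def atkP {n k : ℕ} (C : CodingScheme n k) (t : Msg k) (x : Word n) : Prop :=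
  ∃ y : Word n, 0 < C.enc t y ∧ ∀ i : Fin n, (i : ℕ) < (n + 1) / 2 → x i = y i

open Classical in
/-- The tampering function: output `c₀` if the left half of the input lies in the
left support of `Enc(t)`, else output `c₁` (where `c₀, c₁` share their right half). -/
noncomputable def atk {n k : ℕ} (C : CodingScheme n k) (t : Msg k) (c₀ c₁ : Word n) :
    Word n → Word n :=
  fun x i => if (i : ℕ) < (n + 1) / 2 then (if atkP C t x then c₀ i else c₁ i) else c₀ i

lemma atk_split {n k : ℕ} (C : CodingScheme n k) (t : Msg k) (c₀ c₁ : Word n) :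
    atk C t c₀ c₁ ∈ SplitState n := by
  classical
  constructor
  · intro x y hxy i hi
    have hP : atkP C t x ↔ atkP C t y := by
      constructor
      · rintro ⟨z, hz, ha⟩
        exact ⟨z, hz, fun j hj => by rw [← hxy j hj]; exact ha j hj⟩
      · rintro ⟨z, hz, ha⟩
        exact ⟨z, hz, fun j hj => by rw [hxy j hj]; exact ha j hj⟩
    unfold atk
    rw [if_pos hi, if_pos hi]
    by_cases hp : atkP C t x
    · rw [if_pos hp, if_pos (hP.mp hp)]
    · rw [if_neg hp, if_neg (fun hc => hp (hP.mpr hc))]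
  · intro x y _ i hi
    unfold atk
    rw [if_neg (not_lt.mpr hi), if_neg (not_lt.mpr hi)]

lemma atk_eq_c₀ {n k : ℕ} {C : CodingScheme n k} {t : Msg k} {c₀ c₁ : Word n} {x : Word n}
    (hp : atkP C t x) : atk C t c₀ c₁ x = c₀ := by
  classical
  funext i
  unfold atk
  by_cases hi : (i : ℕ) < (n + 1) / 2
  · rw [if_pos hi, if_pos hp]
  · rw [if_neg hi]

lemma atk_eq_c₁ {n k : ℕ} {C : CodingScheme n k} {t : Msg k} {c₀ c₁ : Word n} {x : Word n}
    (hp : ¬ atkP C t x) (hr : ∀ i : Fin n, (n + 1) / 2 ≤ (i : ℕ) → c₀ i = c₁ i) :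
    atk C t c₀ c₁ x = c₁ := by
  classical
  funext i
  unfold atk
  by_cases hi : (i : ℕ) < (n + 1) / 2
  · rw [if_pos hi, if_neg hp]
  · rw [if_neg hi]
    exact hr i (not_lt.mp hi)

lemma atk_decDist {n k : ℕ} (C : CodingScheme n k) (t s s₀ s₁ : Msg k) (c₀ c₁ : Word n)
    (hr : ∀ i : Fin n, (n + 1) / 2 ≤ (i : ℕ) → c₀ i = c₁ i)
    (hd₀ : C.dec c₀ = some s₀) (hd₁ : C.dec c₁ = some s₁) (hne : s₀ ≠ s₁) :
    decDist C (atk C t c₀ c₁) s (some s₀) = ∑ x, if atkP C t x then C.enc s x else 0 := by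
  classical
  unfold decDist
  refine Finset.sum_congr rfl fun x _ => ?_
  by_cases hp : atkP C t x
  · rw [atk_eq_c₀ hp, hd₀, if_pos rfl, if_pos hp]
  · rw [atk_eq_c₁ hp hr, hd₁, if_neg (fun hc => hne (Option.some_inj.mp hc).symm), if_neg hp]

lemma atk_sum_self {n k : ℕ} (C : CodingScheme n k) (t : Msg k) :
    ∑ x, (if atkP C t x then C.enc t x else (0 : ℝ)) = 1 := by
  classical
  rw [← C.enc_sum t]
  refine Finset.sum_congr rfl fun x _ => ?_
  by_cases hp : atkP C t x
  · rw [if_pos hp]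
  · rw [if_neg hp]
    have : C.enc t x = 0 := by
      by_contra hzero
      exact hp ⟨x, lt_of_le_of_ne (C.enc_nonneg t x) (Ne.symm hzero), fun _ _ => rfl⟩
    rw [this]

/-- The subtype of "right half" coordinates is equivalent to `Fin (n - h)`. -/
def rightEquiv (n h : ℕ) : {i : Fin n // ¬ ((i : ℕ) < h)} ≃ Fin (n - h) where
  toFun i := ⟨(i.1 : ℕ) - h, by have h1 := i.1.isLt; have h2 := i.2; omega⟩
  invFun j := ⟨⟨(j : ℕ) + h, by have := j.isLt; omega⟩, by
    show ¬ ((j : ℕ) + h < h); omega⟩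
  left_inv i := by
    apply Subtype.ext; apply Fin.ext
    have h1 := i.1.isLt; have h2 := i.2
    show ((i.1 : ℕ) - h) + h = (i.1 : ℕ)
    omega
  right_inv j := by
    apply Fin.ext
    show ((j : ℕ) + h) - h = (j : ℕ)
    omega

lemma card_right_subtype (n h : ℕ) :
    Fintype.card {i : Fin n // ¬ ((i : ℕ) < h)} = n - h := by
  rw [Fintype.card_congr (rightEquiv n h), Fintype.card_fin]

/-- For every constant `γ > 0` there exist `ε₀ > 0` and `n₀` such
that for all `n ≥ n₀`: any coding scheme with block length `n` that is non-malleable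
w.r.t. the split-state family with error `ε ≤ ε₀` has rate at most `1/2 + γ`. -/
theorem split_state_capacity_upper_bound :
    ∀ γ : ℝ, 0 < γ →
    ∃ ε₀ : ℝ, 0 < ε₀ ∧ ∃ n₀ : ℕ, ∀ n : ℕ, n₀ ≤ n →
    ∀ k : ℕ, ∀ Cs : CodingScheme n k, ∀ ε : ℝ, 0 ≤ ε → ε ≤ ε₀ →
      NonMalleable Cs (SplitState n) ε →
      (k : ℝ) / (n : ℝ) ≤ 1/2 + γ := by
  intro γ hγ
  refine ⟨1/8, by norm_num, max 1 ⌈(2:ℝ)/γ⌉₊, ?_⟩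
  intro n hn k Cs ε hε0 hε1 hNM
  classical
  have hn1 : 1 ≤ n := le_trans (le_max_left _ _) hn
  have hnpos : (0:ℝ) < n := by exact_mod_cast Nat.lt_of_lt_of_le Nat.zero_lt_one hn1
  -- Key combinatorial bound : k ≤ n - (n+1)/2 + 2
  have key : k ≤ n - (n + 1) / 2 + 2 := by
    by_contra hk
    push_neg at hk
    -- pick a codeword for each message
    have hex : ∀ s : Msg k, ∃ x : Word n, 0 < Cs.enc s x := by
      intro s
      by_contra hcon
      push_neg at hcon
      have hz : ∑ x, Cs.enc s x = 0 :=
        Finset.sum_eq_zero fun x _ => le_antisymm (hcon x) (Cs.enc_nonneg s x)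
      rw [Cs.enc_sum s] at hz
      norm_num at hz
    choose xw hxw using hex
    have cardMsg : Fintype.card (Msg k) = 2 ^ k := by
      simp [Msg]
    have cardRight : Fintype.card ({i : Fin n // ¬ ((i : ℕ) < (n + 1) / 2)} → Bool)
        = 2 ^ (n - (n + 1) / 2) := by
      rw [Fintype.card_fun, card_right_subtype, Fintype.card_bool]
    -- pigeonhole: two messages with codewords sharing the right half
    obtain ⟨s₀, s₁, hs01, hcc⟩ :=
      Fintype.exists_ne_map_eq_of_card_lt
        (fun s : Msg k => (fun j : {i : Fin n // ¬ ((i : ℕ) < (n + 1) / 2)} => xw s j.1))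
        (by
          rw [cardMsg, cardRight]
          exact Nat.pow_lt_pow_right one_lt_two (by omega))
    have hr : ∀ i : Fin n, (n + 1) / 2 ≤ (i : ℕ) → xw s₀ i = xw s₁ i := by
      intro i hi
      exact congrFun hcc ⟨i, not_lt.mpr hi⟩
    have hd₀ : Cs.dec (xw s₀) = some s₀ := Cs.dec_enc _ _ (hxw s₀)
    have hd₁ : Cs.dec (xw s₁) = some s₁ := Cs.dec_enc _ _ (hxw s₁)
    -- there are many messages
    have hM8 : 8 ≤ Fintype.card (Msg k) := by
      rw [cardMsg]
      calc (8:ℕ) = 2 ^ 3 := by norm_num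
        _ ≤ 2 ^ k := Nat.pow_le_pow_right (by norm_num) (by omega)
    set T' : Finset (Msg k) := Finset.univ \ {s₀, s₁} with hT'
    have hcardT' : T'.card = Fintype.card (Msg k) - 2 := by
      rw [hT', Finset.card_sdiff_of_subset (Finset.subset_univ _), Finset.card_univ,
        Finset.card_pair hs01]
    have hT'ne : T'.Nonempty := by
      rw [← Finset.card_pos, hcardT']
      omega
    obtain ⟨tb, htb⟩ := hT'ne
    have htb01 : tb ≠ s₀ ∧ tb ≠ s₁ := by
      rw [hT', Finset.mem_sdiff] at htb
      simpa using htb.2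
    -- main per-message estimate
    have hmain : ∀ t ∈ T',
        (1:ℝ)/2 ≤ ∑ x, (if atkP Cs t x then Cs.enc tb x else 0) := by
      intro t htT
      have ht01 : t ≠ s₀ ∧ t ≠ s₁ := by
        rw [hT', Finset.mem_sdiff] at htT
        simpa using htT.2
      obtain ⟨D, hD, hstat⟩ := hNM (atk Cs t (xw s₀) (xw s₁)) (atk_split Cs t _ _)
      have h1 : |decDist Cs (atk Cs t (xw s₀) (xw s₁)) t (some s₀)
          - copyDist D t (some s₀)| ≤ 2 * ε :=
        le_trans (abs_sub_le_two_statDist _ _ _) (by linarith [hstat t])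
      have h2 : |decDist Cs (atk Cs t (xw s₀) (xw s₁)) tb (some s₀)
          - copyDist D tb (some s₀)| ≤ 2 * ε :=
        le_trans (abs_sub_le_two_statDist _ _ _) (by linarith [hstat tb])
      rw [atk_decDist Cs t t s₀ s₁ _ _ hr hd₀ hd₁ hs01, atk_sum_self,
        copyDist_ne D t s₀ ht01.1] at h1
      rw [atk_decDist Cs t tb s₀ s₁ _ _ hr hd₀ hd₁ hs01,
        copyDist_ne D tb s₀ htb01.1] at h2
      have e1 := abs_le.mp h1
      have e2 := abs_le.mp h2
      have e1' := e1.2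
      have e2' := e2.1
      linarith
    -- lower bound for the double sum
    have hLB : (T'.card : ℝ) * (1/2)
        ≤ ∑ t ∈ T', ∑ x, (if atkP Cs t x then Cs.enc tb x else 0) := by
      have := Finset.card_nsmul_le_sum T'
        (fun t => ∑ x, (if atkP Cs t x then Cs.enc tb x else 0)) ((1:ℝ)/2) hmain
      simpa [nsmul_eq_mul] using this
    -- counting: for each x, few messages can have atkP Cs t x
    have hcount : ∀ x : Word n,
        (T'.filter fun t => atkP Cs t x).card ≤ 2 ^ (n - (n + 1) / 2) := by
      intro x
      have hinj : ∀ t₁ ∈ T'.filter (fun t => atkP Cs t x),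
          ∀ t₂ ∈ T'.filter (fun t => atkP Cs t x),
          (fun j : {i : Fin n // ¬ ((i : ℕ) < (n + 1) / 2)} =>
            (if hp : atkP Cs t₁ x then hp.choose else x) j.1)
          = (fun j : {i : Fin n // ¬ ((i : ℕ) < (n + 1) / 2)} =>
            (if hp : atkP Cs t₂ x then hp.choose else x) j.1) → t₁ = t₂ := by
        intro t₁ h₁ t₂ h₂ hgeq
        have hp₁ : atkP Cs t₁ x := (Finset.mem_filter.mp h₁).2
        have hp₂ : atkP Cs t₂ x := (Finset.mem_filter.mp h₂).2
        rw [dif_pos hp₁] at hgeq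
        rw [dif_pos hp₂] at hgeq
        have hy₁ := hp₁.choose_spec
        have hy₂ := hp₂.choose_spec
        have hyy : hp₁.choose = hp₂.choose := by
          funext i
          by_cases hi : (i : ℕ) < (n + 1) / 2
          · rw [← hy₁.2 i hi, ← hy₂.2 i hi]
          · exact congrFun hgeq ⟨i, hi⟩
        have hdec₁ : Cs.dec hp₁.choose = some t₁ := Cs.dec_enc _ _ hy₁.1
        have hdec₂ : Cs.dec hp₂.choose = some t₂ := Cs.dec_enc _ _ hy₂.1
        rw [hyy, hdec₂] at hdec₁
        exact (Option.some_inj.mp hdec₁).symm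
      calc (T'.filter fun t => atkP Cs t x).card
          ≤ (Finset.univ : Finset ({i : Fin n // ¬ ((i : ℕ) < (n + 1) / 2)} → Bool)).card := by
            apply Finset.card_le_card_of_injOn
              (fun t => (fun j : {i : Fin n // ¬ ((i : ℕ) < (n + 1) / 2)} =>
                (if hp : atkP Cs t x then hp.choose else x) j.1))
              (fun _ _ => Finset.mem_univ _)
            intro t₁ h₁ t₂ h₂ hgeq
            exact hinj t₁ h₁ t₂ h₂ hgeq
        _ = 2 ^ (n - (n + 1) / 2) := by rw [Finset.card_univ, cardRight]
    -- upper bound for the double sum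
    have hUB : ∑ t ∈ T', ∑ x, (if atkP Cs t x then Cs.enc tb x else 0)
        ≤ (2:ℝ) ^ (n - (n + 1) / 2) := by
      rw [Finset.sum_comm]
      have hxb : ∀ x : Word n,
          ∑ t ∈ T', (if atkP Cs t x then Cs.enc tb x else 0)
          ≤ Cs.enc tb x * (2:ℝ) ^ (n - (n + 1) / 2) := by
        intro x
        rw [Finset.sum_ite, Finset.sum_const_zero, add_zero, Finset.sum_const,
          nsmul_eq_mul]
        rw [mul_comm]
        apply mul_le_mul_of_nonneg_left _ (Cs.enc_nonneg tb x)
        calc ((T'.filter fun t => atkP Cs t x).card : ℝ)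
            ≤ ((2 ^ (n - (n + 1) / 2) : ℕ) : ℝ) := by exact_mod_cast hcount x
          _ = (2:ℝ) ^ (n - (n + 1) / 2) := by push_cast; ring
      calc ∑ x, ∑ t ∈ T', (if atkP Cs t x then Cs.enc tb x else 0)
          ≤ ∑ x, Cs.enc tb x * (2:ℝ) ^ (n - (n + 1) / 2) :=
            Finset.sum_le_sum fun x _ => hxb x
        _ = (2:ℝ) ^ (n - (n + 1) / 2) := by
            rw [← Finset.sum_mul, Cs.enc_sum, one_mul]
    -- combine
    have hfin : ((Fintype.card (Msg k) - 2 : ℕ) : ℝ) * (1/2)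
        ≤ (2:ℝ) ^ (n - (n + 1) / 2) := by
      rw [← hcardT']
      exact le_trans hLB hUB
    have hone : (1:ℝ) ≤ (2:ℝ) ^ (n - (n + 1) / 2) := one_le_pow₀ (by norm_num)
    have hcast : ((Fintype.card (Msg k) - 2 : ℕ) : ℝ) = (2:ℝ) ^ k - 2 := by
      rw [Nat.cast_sub (by omega), cardMsg]
      push_cast
      ring
    rw [hcast] at hfin
    have hfinal : ((2 ^ k : ℕ) : ℝ) ≤ ((2 ^ (n - (n + 1) / 2 + 2) : ℕ) : ℝ) := by
      push_cast [pow_add]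
      nlinarith
    have hklenat : 2 ^ k ≤ 2 ^ (n - (n + 1) / 2 + 2) := by exact_mod_cast hfinal
    have : k ≤ n - (n + 1) / 2 + 2 :=
      (Nat.pow_le_pow_iff_right (by norm_num : 1 < 2)).mp hklenat
    omega
  -- final arithmetic
  have hk2 : (k : ℝ) ≤ (n : ℝ)/2 + 2 := by
    have h1 : k ≤ n / 2 + 2 := by omega
    calc (k : ℝ) ≤ ((n / 2 + 2 : ℕ) : ℝ) := by exact_mod_cast h1
      _ = ((n / 2 : ℕ) : ℝ) + 2 := by push_cast; ring
      _ ≤ (n : ℝ)/2 + 2 := by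
          have h2 : ((n / 2 : ℕ) : ℝ) ≤ (n : ℝ) / 2 := Nat.cast_div_le
          linarith
  have hγn : 2 / (n : ℝ) ≤ γ := by
    have hceil : (2:ℝ)/γ ≤ (n : ℝ) := by
      have h1 : ((⌈(2:ℝ)/γ⌉₊ : ℕ) : ℝ) ≤ (n : ℝ) := by
        exact_mod_cast le_trans (le_max_right 1 _) hn
      exact le_trans (Nat.le_ceil _) h1
    rw [div_le_iff₀ hnpos]
    rw [div_le_iff₀ hγ] at hceil
    linarith
  have hdiv : (k : ℝ) / n ≤ ((n : ℝ)/2 + 2) / n := by gcongr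
  have heq : ((n : ℝ)/2 + 2) / n = 1/2 + 2 / n := by
    field_simp
  rw [heq] at hdiv
  linarith
end
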